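/- arXiv:1501.03685 — 2 statements merged into one kernel-verified Lean document; each statement's English description precedes it below -/
import Mathlib

section
/- For discrete random variables, the two chain-rule expansions of H(X_0^T) = I(X_0^T; X_0^T, Y^T) yield the identity ∑_{t=1}^T I(X_{0,t}; X_0^{t−1}, Y^{t−1}, X_{0,t+1}^T) = ∑_{t=1}^T I(X_{0,t+1}^T; X_{0,t}, Y_t | X_0^{t−1}, Y^{t−1}), provided the sequence X_0^T is i.i.d. -/
open Finset

/-- Probability that the random variable `X` on the finite probability space
`(Ω, μ)` takes the value `x`. -/
noncomputable def pr {Ω α : Type*} [Fintype Ω] [DecidableEq α]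
    (μ : Ω → ℝ) (X : Ω → α) (x : α) : ℝ :=
  ∑ ω, if X ω = x then μ ω else 0

/-- Shannon entropy of the random variable `X` under `μ`. -/
noncomputable def Hent {Ω α : Type*} [Fintype Ω] [Fintype α] [DecidableEq α]
    (μ : Ω → ℝ) (X : Ω → α) : ℝ :=
  -∑ x, pr μ X x * Real.log (pr μ X x)

/-- Conditional entropy `H(X | Y)` under `μ`. -/
noncomputable def condH {Ω α β : Type*} [Fintype Ω] [Fintype α] [DecidableEq α]
    [Fintype β] [DecidableEq β] (μ : Ω → ℝ) (X : Ω → α) (Y : Ω → β) : ℝ :=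
  Hent μ (fun ω => (X ω, Y ω)) - Hent μ Y

/-- Mutual information `I(X; Y)` under `μ`. -/
noncomputable def MI {Ω α β : Type*} [Fintype Ω] [Fintype α] [DecidableEq α]
    [Fintype β] [DecidableEq β] (μ : Ω → ℝ) (X : Ω → α) (Y : Ω → β) : ℝ :=
  Hent μ X + Hent μ Y - Hent μ (fun ω => (X ω, Y ω))

/-- Conditional mutual information `I(X; Y | Z)` under `μ`. -/
noncomputable def condMI {Ω α β γ : Type*} [Fintype Ω] [Fintype α] [DecidableEq α]
    [Fintype β] [DecidableEq β] [Fintype γ] [DecidableEq γ]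
    (μ : Ω → ℝ) (X : Ω → α) (Y : Ω → β) (Z : Ω → γ) : ℝ :=
  condH μ X Z + condH μ Y Z - condH μ (fun ω => (X ω, Y ω)) Z

/-- The indices strictly before `t`, as a map `Fin t.val → Fin T`. -/
def preIdx {T : ℕ} (t : Fin T) (s : Fin t.val) : Fin T :=
  Fin.castLE t.isLt.le s

/-- The indices strictly after `t`, as a map `Fin (T - (t.val+1)) → Fin T`. -/
def sufIdx {T : ℕ} (t : Fin T) (s : Fin (T - (t.val + 1))) : Fin T :=
  ⟨t.val + 1 + s.val, by have h1 := s.isLt; have h2 := t.isLt; omega⟩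

section aux
variable {Ω α β : Type*} [Fintype Ω]

lemma pr_nonneg [DecidableEq α] (μ : Ω → ℝ) (hμ0 : ∀ ω, 0 ≤ μ ω) (X : Ω → α) (x : α) :
    0 ≤ pr μ X x :=
  Finset.sum_nonneg fun ω _ => by by_cases h : X ω = x <;> simp [h, hμ0 ω]

lemma pr_total [Fintype α] [DecidableEq α] (μ : Ω → ℝ) (X : Ω → α) :
    ∑ x, pr μ X x = ∑ ω, μ ω := by
  unfold pr
  rw [Finset.sum_comm]
  exact Finset.sum_congr rfl fun ω _ => by simp

lemma pr_comp [Fintype α] [DecidableEq α] [DecidableEq β]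
    (μ : Ω → ℝ) (X : Ω → α) (g : α → β) (y : β) :
    pr μ (fun ω => g (X ω)) y = ∑ x, if g x = y then pr μ X x else 0 := by
  unfold pr
  have step1 : ∀ ω : Ω, (if g (X ω) = y then μ ω else 0)
      = ∑ x, if X ω = x then (if g x = y then μ ω else 0) else 0 := by
    intro ω; simp
  calc (∑ ω, if g (X ω) = y then μ ω else 0)
      = ∑ ω, ∑ x, if X ω = x then (if g x = y then μ ω else 0) else 0 :=
        Finset.sum_congr rfl fun ω _ => step1 ω
    _ = ∑ x, ∑ ω, if X ω = x then (if g x = y then μ ω else 0) else 0 := Finset.sum_comm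
    _ = ∑ x, if g x = y then (∑ ω, if X ω = x then μ ω else 0) else 0 := by
        apply Finset.sum_congr rfl
        intro x _
        by_cases h : g x = y <;> simp [h]

lemma hent_comp_inj [Fintype α] [DecidableEq α] [Fintype β] [DecidableEq β]
    (μ : Ω → ℝ) (X : Ω → α) (e : α → β) (he : Function.Injective e) :
    Hent μ (fun ω => e (X ω)) = Hent μ X := by
  have h1 : ∀ x, pr μ (fun ω => e (X ω)) (e x) = pr μ X x := by
    intro x
    unfold pr
    exact Finset.sum_congr rfl fun ω _ => by simp [he.eq_iff]
  have h2 : ∀ y, y ∉ Finset.image e Finset.univ → pr μ (fun ω => e (X ω)) y = 0 := by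
    intro y hy
    apply Finset.sum_eq_zero
    intro ω _
    have : e (X ω) ≠ y := fun h => hy (h ▸ Finset.mem_image_of_mem e (Finset.mem_univ _))
    simp [this]
  unfold Hent
  congr 1
  rw [← Finset.sum_subset (Finset.subset_univ (Finset.image e Finset.univ))
      (fun y _ hy => by rw [h2 y hy]; simp)]
  rw [Finset.sum_image (fun a _ b _ h => he h)]
  exact Finset.sum_congr rfl fun x _ => by rw [h1]

lemma hent_congr [Fintype α] [DecidableEq α] [Fintype β] [DecidableEq β]
    (μ : Ω → ℝ) (X : Ω → α) (Yv : Ω → β) (f : α → β) (g : β → α)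
    (hf : ∀ ω, f (X ω) = Yv ω) (hg : ∀ ω, g (Yv ω) = X ω) :
    Hent μ X = Hent μ Yv := by
  have e1 : Hent μ (fun ω => (X ω, Yv ω)) = Hent μ X := by
    rw [← hent_comp_inj μ X (fun a => (a, f a)) (fun a b h => congrArg Prod.fst h)]
    congr 1; funext ω; rw [hf ω]
  have e2 : Hent μ (fun ω => (Yv ω, X ω)) = Hent μ Yv := by
    rw [← hent_comp_inj μ Yv (fun b => (b, g b)) (fun a b h => congrArg Prod.fst h)]
    congr 1; funext ω; rw [hg ω]
  have e3 : Hent μ (fun ω => (Yv ω, X ω)) = Hent μ (fun ω => (X ω, Yv ω)) :=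
    hent_comp_inj μ (fun ω => (X ω, Yv ω)) Prod.swap Prod.swap_injective
  rw [← e1, ← e2, e3]

lemma hent_subsingleton [Fintype α] [DecidableEq α] [Subsingleton α]
    (μ : Ω → ℝ) (hμ1 : ∑ ω, μ ω = 1) (X : Ω → α) :
    Hent μ X = 0 := by
  have h : ∀ x, pr μ X x = 1 := by
    intro x
    unfold pr
    rw [Finset.sum_congr rfl fun ω _ => if_pos (Subsingleton.elim _ _)]
    exact hμ1
  unfold Hent
  simp [h]

end aux

set_option linter.unusedSectionVars false
set_option linter.unusedVariables false
section str
variable {Ω A B : Type*} [Fintype Ω] [Fintype A] [DecidableEq A]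
    [Fintype B] [DecidableEq B] {T : ℕ}
    (μ : Ω → ℝ) (X0 : Fin T → Ω → A) (Y : Fin T → Ω → B)

noncomputable def Dfun (n : ℕ) : ℝ :=
  Hent μ (fun ω =>
    (fun s : Fin (min n T) => X0 ⟨s.val, lt_of_lt_of_le s.isLt (min_le_right n T)⟩ ω,
     fun s : Fin (min n T) => Y ⟨s.val, lt_of_lt_of_le s.isLt (min_le_right n T)⟩ ω))

noncomputable def Gfun (n : ℕ) : ℝ :=
  Hent μ (fun ω =>
    (fun s : Fin T => X0 s ω,
     fun s : Fin (min n T) => Y ⟨s.val, lt_of_lt_of_le s.isLt (min_le_right n T)⟩ ω))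

lemma hXc : ∀ (i j : Fin T) (ω : Ω), i.val = j.val → X0 i ω = X0 j ω :=
  fun i j ω h => by rw [Fin.ext h]

lemma hN1 (t : Fin T) :
    Hent μ (fun ω => ((fun s : Fin t.val => X0 (preIdx t s) ω, fun s : Fin t.val => Y (preIdx t s) ω),
                      fun s : Fin (T - (t.val+1)) => X0 (sufIdx t s) ω))
      = Hent μ (fun ω => ((fun s : Fin (T - (t.val+1)) => X0 (sufIdx t s) ω),
                      (fun s : Fin t.val => X0 (preIdx t s) ω, fun s : Fin t.val => Y (preIdx t s) ω))) :=
  hent_congr μ _ _ Prod.swap Prod.swap (fun ω => rfl) (fun ω => rfl)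

lemma hN2 (t : Fin T) :
    Hent μ (fun ω => (fun s : Fin t.val => X0 (preIdx t s) ω, fun s : Fin t.val => Y (preIdx t s) ω))
      = Dfun μ X0 Y t.val := by
  refine hent_congr μ _ _
    (fun p => (fun s : Fin (min t.val T) => p.1 ⟨s.val, lt_of_lt_of_le s.isLt (min_le_left _ _)⟩,
               fun s : Fin (min t.val T) => p.2 ⟨s.val, lt_of_lt_of_le s.isLt (min_le_left _ _)⟩))
    (fun p => (fun s : Fin t.val => p.1 ⟨s.val, lt_min s.isLt (s.isLt.trans t.isLt)⟩,
               fun s : Fin t.val => p.2 ⟨s.val, lt_min s.isLt (s.isLt.trans t.isLt)⟩))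
    (fun ω => rfl) (fun ω => rfl)

lemma hN3 (t : Fin T) :
    Hent μ (fun ω => ((X0 t ω, Y t ω),
        (fun s : Fin t.val => X0 (preIdx t s) ω, fun s : Fin t.val => Y (preIdx t s) ω)))
      = Dfun μ X0 Y (t.val + 1) := by
  refine hent_congr μ _ _
    (fun p => (fun s : Fin (min (t.val+1) T) =>
                 if h : s.val < t.val then p.2.1 ⟨s.val, h⟩ else p.1.1,
               fun s : Fin (min (t.val+1) T) =>
                 if h : s.val < t.val then p.2.2 ⟨s.val, h⟩ else p.1.2))
    (fun p => ((p.1 ⟨t.val, lt_min (Nat.lt_succ_self _) t.isLt⟩,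
                p.2 ⟨t.val, lt_min (Nat.lt_succ_self _) t.isLt⟩),
               (fun s : Fin t.val => p.1 ⟨s.val, lt_min (Nat.lt_succ_of_lt s.isLt) (s.isLt.trans t.isLt)⟩,
                fun s : Fin t.val => p.2 ⟨s.val, lt_min (Nat.lt_succ_of_lt s.isLt) (s.isLt.trans t.isLt)⟩)))
    ?_ (fun ω => rfl)
  intro ω
  have hs : ∀ s : Fin (min (t.val+1) T), ¬ s.val < t.val → s.val = t.val := by
    intro s h
    have := lt_of_lt_of_le s.isLt (min_le_left _ _)
    omega
  refine Prod.ext ?_ ?_ <;> funext s <;> dsimp only <;> by_cases h : s.val < t.val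
  · rw [dif_pos h]; exact hXc X0 _ _ ω rfl
  · rw [dif_neg h]
    exact hXc X0 t _ ω (hs s h).symm
  · rw [dif_pos h]; exact hXc Y _ _ ω rfl
  · rw [dif_neg h]
    exact hXc Y t _ ω (hs s h).symm

lemma hN4 (t : Fin T) :
    Hent μ (fun ω => (X0 t ω,
        ((fun s : Fin t.val => X0 (preIdx t s) ω, fun s : Fin t.val => Y (preIdx t s) ω),
         fun s : Fin (T - (t.val+1)) => X0 (sufIdx t s) ω)))
      = Gfun μ X0 Y t.val := by
  refine hent_congr μ _ _
    (fun p => (fun s : Fin T =>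
                 if h : s.val < t.val then p.2.1.1 ⟨s.val, h⟩
                 else if h2 : s.val = t.val then p.1
                 else p.2.2 ⟨s.val - (t.val+1), by have := s.isLt; omega⟩,
               fun s : Fin (min t.val T) => p.2.1.2 ⟨s.val, lt_of_lt_of_le s.isLt (min_le_left _ _)⟩))
    (fun p => (p.1 t,
               ((fun s : Fin t.val => p.1 (preIdx t s),
                 fun s : Fin t.val => p.2 ⟨s.val, lt_min s.isLt (s.isLt.trans t.isLt)⟩),
                fun s : Fin (T - (t.val+1)) => p.1 (sufIdx t s))))
    ?_ (fun ω => rfl)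
  intro ω
  refine Prod.ext ?_ rfl
  funext s
  dsimp only
  by_cases h : s.val < t.val
  · rw [dif_pos h]; exact hXc X0 _ _ ω rfl
  · rw [dif_neg h]
    by_cases h2 : s.val = t.val
    · rw [dif_pos h2]
      exact hXc X0 t s ω h2.symm
    · rw [dif_neg h2]
      refine hXc X0 _ s ω ?_
      show t.val + 1 + (s.val - (t.val+1)) = s.val
      omega

lemma hN5 (t : Fin T) :
    Hent μ (fun ω => (((fun s : Fin (T - (t.val+1)) => X0 (sufIdx t s) ω), (X0 t ω, Y t ω)),
        (fun s : Fin t.val => X0 (preIdx t s) ω, fun s : Fin t.val => Y (preIdx t s) ω)))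
      = Gfun μ X0 Y (t.val + 1) := by
  refine hent_congr μ _ _
    (fun p => (fun s : Fin T =>
                 if h : s.val < t.val then p.2.1 ⟨s.val, h⟩
                 else if h2 : s.val = t.val then p.1.2.1
                 else p.1.1 ⟨s.val - (t.val+1), by have := s.isLt; omega⟩,
               fun s : Fin (min (t.val+1) T) =>
                 if h : s.val < t.val then p.2.2 ⟨s.val, h⟩ else p.1.2.2))
    (fun p => ((fun s : Fin (T - (t.val+1)) => p.1 (sufIdx t s),
                (p.1 t, p.2 ⟨t.val, lt_min (Nat.lt_succ_self _) t.isLt⟩)),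
               (fun s : Fin t.val => p.1 (preIdx t s),
                fun s : Fin t.val => p.2 ⟨s.val, lt_min (Nat.lt_succ_of_lt s.isLt) (s.isLt.trans t.isLt)⟩)))
    ?_ (fun ω => rfl)
  intro ω
  refine Prod.ext ?_ ?_ <;> funext s <;> dsimp only
  · by_cases h : s.val < t.val
    · rw [dif_pos h]; exact hXc X0 _ _ ω rfl
    · rw [dif_neg h]
      by_cases h2 : s.val = t.val
      · rw [dif_pos h2]
        exact hXc X0 t s ω h2.symm
      · rw [dif_neg h2]
        refine hXc X0 _ s ω ?_
        show t.val + 1 + (s.val - (t.val+1)) = s.val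
        omega
  · by_cases h : s.val < t.val
    · rw [dif_pos h]; exact hXc Y _ _ ω rfl
    · rw [dif_neg h]
      have hs : s.val = t.val := by
        have := lt_of_lt_of_le s.isLt (min_le_left _ _)
        omega
      exact hXc Y t _ ω hs.symm

lemma hN6 (hμ1 : ∑ ω, μ ω = 1) : Dfun μ X0 Y 0 = 0 := by
  haveI : IsEmpty (Fin (min 0 T)) := ⟨fun s => absurd s.isLt (by simp)⟩
  haveI : Subsingleton ((Fin (min 0 T) → A) × (Fin (min 0 T) → B)) :=
    ⟨fun p q => Prod.ext (funext fun s => isEmptyElim s) (funext fun s => isEmptyElim s)⟩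
  exact hent_subsingleton μ hμ1 _

lemma hN7 : Gfun μ X0 Y 0 = Hent μ (fun ω => fun s => X0 s ω) := by
  haveI : IsEmpty (Fin (min 0 T)) := ⟨fun s => absurd s.isLt (by simp)⟩
  exact hent_congr μ _ _ Prod.fst (fun x => (x, fun s => isEmptyElim s))
    (fun ω => rfl) (fun ω => Prod.ext rfl (funext fun s => isEmptyElim s))

lemma hN8 : Gfun μ X0 Y T = Dfun μ X0 Y T := by
  refine hent_congr μ _ _
    (fun p => (fun s : Fin (min T T) => p.1 ⟨s.val, lt_of_lt_of_le s.isLt (min_le_right T T)⟩, p.2))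
    (fun p => (fun s : Fin T => p.1 ⟨s.val, lt_min s.isLt s.isLt⟩, p.2))
    (fun ω => rfl) (fun ω => rfl)

end str
set_option linter.unusedSectionVars true
set_option linter.unusedVariables true


/-- Chain-rule identity for i.i.d. state sequences:
`∑ₜ I(X₀ₜ; X₀^{t−1}, Y^{t−1}, X₀ₜ₊₁^T) = ∑ₜ I(X₀ₜ₊₁^T; (X₀ₜ, Yₜ) | X₀^{t−1}, Y^{t−1})`. -/
theorem iid_chain_rule_identity
    {Ω A B : Type*} [Fintype Ω] [Fintype A] [DecidableEq A]
    [Fintype B] [DecidableEq B] {T : ℕ}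
    (μ : Ω → ℝ) (hμ0 : ∀ ω, 0 ≤ μ ω) (hμ1 : ∑ ω, μ ω = 1)
    (X0 : Fin T → Ω → A) (Y : Fin T → Ω → B)
    (ρ : A → ℝ)
    -- the sequence X₀^T is i.i.d. with common law ρ
    (hiid : ∀ f : Fin T → A,
      pr μ (fun ω => fun t => X0 t ω) f = ∏ t, ρ (f t)) :
    (∑ t : Fin T, MI μ (X0 t)
        (fun ω => ((fun s => X0 (preIdx t s) ω, fun s => Y (preIdx t s) ω),
                   fun s => X0 (sufIdx t s) ω)))
      = ∑ t : Fin T, condMI μ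
          (fun ω => fun s => X0 (sufIdx t s) ω)
          (fun ω => (X0 t ω, Y t ω))
          (fun ω => (fun s => X0 (preIdx t s) ω, fun s => Y (preIdx t s) ω)) := by
  classical
  rcases Nat.eq_zero_or_pos T with hT0 | hT
  · subst hT0; simp
  -- i.i.d. part
  set σ : ℝ := ∑ a, ρ a with hσ
  have hps : ∀ g : Fin T → A → ℝ, ∑ f : Fin T → A, ∏ t, g t (f t) = ∏ t, ∑ a, g t a :=
    fun g => (Fintype.prod_sum g).symm
  have htot : ∑ f : Fin T → A, ∏ t, ρ (f t) = 1 := by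
    rw [← Finset.sum_congr rfl fun f _ => hiid f, pr_total, hμ1]
  have hσT : σ ^ T = 1 := by
    rw [hσ, Fintype.sum_pow]
    simpa using htot
  set ρ' : A → ℝ := fun a => σ ^ (T - 1) * ρ a with hρ'
  have hρ'joint : ∀ f : Fin T → A, pr μ (fun ω => fun t => X0 t ω) f = ∏ t, ρ' (f t) := by
    intro f
    rw [hiid f, hρ']
    simp only [Finset.prod_mul_distrib, Finset.prod_const, Finset.card_univ, Fintype.card_fin]
    rw [← pow_mul, mul_comm (T-1) T, pow_mul, hσT, one_pow, one_mul]
  have hρ'sum : ∑ a, ρ' a = 1 := by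
    rw [hρ']
    rw [← Finset.mul_sum, ← hσ, ← pow_succ, Nat.sub_add_cancel hT, hσT]
  have hmarg : ∀ (t : Fin T) (x : A), pr μ (X0 t) x = ρ' x := by
    intro t x
    have h0 : pr μ (X0 t) x = pr μ (fun ω => (fun s => X0 s ω) t) x := rfl
    rw [h0, pr_comp μ (fun ω => fun s => X0 s ω) (fun f => f t) x]
    calc (∑ f : Fin T → A, if f t = x then pr μ (fun ω s => X0 s ω) f else 0)
        = ∑ f : Fin T → A, ∏ s, (if s = t then (if f s = x then ρ' (f s) else 0) else ρ' (f s)) := by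
          apply Finset.sum_congr rfl
          intro f _
          rw [hρ'joint f]
          by_cases hft : f t = x
          · rw [if_pos hft]
            apply Finset.prod_congr rfl
            intro s _
            by_cases hst : s = t
            · subst hst; simp [hft]
            · simp [hst]
          · rw [if_neg hft]
            symm
            exact Finset.prod_eq_zero (Finset.mem_univ t) (by simp [hft])
      _ = ∏ s : Fin T, ∑ a, (if s = t then (if a = x then ρ' a else 0) else ρ' a) :=
          hps (fun s a => if s = t then (if a = x then ρ' a else 0) else ρ' a)
      _ = ∏ s : Fin T, (if s = t then ρ' x else 1) := by
          apply Finset.prod_congr rfl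
          intro s _
          by_cases hst : s = t <;> simp [hst, hρ'sum]
      _ = ρ' x := by rw [Finset.prod_ite_eq' Finset.univ t (fun _ => ρ' x)]; simp
  have hkeylog : ∀ f : Fin T → A,
      (∏ t, ρ' (f t)) * Real.log (∏ t, ρ' (f t))
        = ∑ t, (∏ s, ρ' (f s)) * Real.log (ρ' (f t)) := by
    intro f
    by_cases h : ∀ t, ρ' (f t) ≠ 0
    · rw [Real.log_prod fun t _ => h t, Finset.mul_sum]
    · push_neg at h
      obtain ⟨t0, ht0⟩ := h
      have hz : (∏ t, ρ' (f t)) = 0 := Finset.prod_eq_zero (Finset.mem_univ t0) ht0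
      rw [hz]
      simp
  have hHjoint : Hent μ (fun ω => fun t => X0 t ω) = ∑ t : Fin T, Hent μ (X0 t) := by
    unfold Hent
    rw [Finset.sum_congr rfl fun f _ => by rw [hρ'joint f, hkeylog f]]
    rw [Finset.sum_comm]
    simp only [hmarg]
    rw [neg_eq_iff_eq_neg, ← Finset.sum_neg_distrib]
    apply Finset.sum_congr rfl
    intro t _
    rw [neg_neg]
    calc (∑ f : Fin T → A, (∏ s, ρ' (f s)) * Real.log (ρ' (f t)))
        = ∑ f : Fin T → A, ∏ s, (if s = t then ρ' (f s) * Real.log (ρ' (f s)) else ρ' (f s)) := by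
          apply Finset.sum_congr rfl
          intro f _
          rw [← Finset.mul_prod_erase Finset.univ (fun s => ρ' (f s)) (Finset.mem_univ t),
              ← Finset.mul_prod_erase Finset.univ _ (Finset.mem_univ t), if_pos rfl]
          rw [Finset.prod_congr rfl (fun s hs => if_neg (Finset.ne_of_mem_erase hs))]
          ring
      _ = ∏ s : Fin T, ∑ a, (if s = t then ρ' a * Real.log (ρ' a) else ρ' a) :=
          hps (fun s a => if s = t then ρ' a * Real.log (ρ' a) else ρ' a)
      _ = ∏ s : Fin T, (if s = t then (∑ a, ρ' a * Real.log (ρ' a)) else 1) := by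
          apply Finset.prod_congr rfl
          intro s _
          by_cases hst : s = t <;> simp [hst, hρ'sum]
      _ = ∑ x, ρ' x * Real.log (ρ' x) := by
          rw [Finset.prod_ite_eq' Finset.univ t (fun _ => ∑ a, ρ' a * Real.log (ρ' a))]; simp
  -- structural part
  have hterm : ∀ t : Fin T,
      MI μ (X0 t)
        (fun ω => ((fun s => X0 (preIdx t s) ω, fun s => Y (preIdx t s) ω),
                   fun s => X0 (sufIdx t s) ω))
      - condMI μ
          (fun ω => fun s => X0 (sufIdx t s) ω)
          (fun ω => (X0 t ω, Y t ω))
          (fun ω => (fun s => X0 (preIdx t s) ω, fun s => Y (preIdx t s) ω))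
      = Hent μ (X0 t) + (Dfun μ X0 Y t.val - Dfun μ X0 Y (t.val+1))
        + (Gfun μ X0 Y (t.val+1) - Gfun μ X0 Y t.val) := by
    intro t
    simp only [MI, condMI, condH]
    rw [hN1 μ X0 Y t, hN2 μ X0 Y t, hN3 μ X0 Y t, hN4 μ X0 Y t, hN5 μ X0 Y t]
    ring
  rw [← sub_eq_zero, ← Finset.sum_sub_distrib,
      Finset.sum_congr rfl fun t _ => hterm t,
      Finset.sum_add_distrib, Finset.sum_add_distrib]
  have h2 : ∑ t : Fin T, (Dfun μ X0 Y t.val - Dfun μ X0 Y (t.val+1))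
      = Dfun μ X0 Y 0 - Dfun μ X0 Y T := by
    rw [Fin.sum_univ_eq_sum_range (fun i => Dfun μ X0 Y i - Dfun μ X0 Y (i+1)) T]
    calc (∑ i ∈ Finset.range T, (Dfun μ X0 Y i - Dfun μ X0 Y (i+1)))
        = ∑ i ∈ Finset.range T, -(Dfun μ X0 Y (i+1) - Dfun μ X0 Y i) := by
          apply Finset.sum_congr rfl; intro i _; ring
      _ = -(∑ i ∈ Finset.range T, (Dfun μ X0 Y (i+1) - Dfun μ X0 Y i)) := by
          rw [Finset.sum_neg_distrib]
      _ = -(Dfun μ X0 Y T - Dfun μ X0 Y 0) := by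
          rw [Finset.sum_range_sub (fun i => Dfun μ X0 Y i) T]
      _ = Dfun μ X0 Y 0 - Dfun μ X0 Y T := by ring
  have h3 : ∑ t : Fin T, (Gfun μ X0 Y (t.val+1) - Gfun μ X0 Y t.val)
      = Gfun μ X0 Y T - Gfun μ X0 Y 0 := by
    rw [Fin.sum_univ_eq_sum_range (fun i => Gfun μ X0 Y (i+1) - Gfun μ X0 Y i) T]
    rw [Finset.sum_range_sub (fun i => Gfun μ X0 Y i) T]
  rw [h2, h3, hN6 μ X0 Y hμ1, hN8 μ X0 Y, hN7 μ X0 Y]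
  rw [← hHjoint]
  ring
end

section
/- Let Z be uniformly distributed on {1,…,T} independent of all other random variables, let X_0^T be i.i.d., and suppose that for each t, X_{2,t} is a (deterministic) function of (X_0^{t−1}, Y^{t−1}), X_{1,t} is a function of X_0^T, and Y_t satisfies the Markov chain (Z, X_0^{Z−1}, X_{0,Z+1}^T, Y^{Z−1}) − (X_{0,Z}, X_{1,Z}, X_{2,Z}) − Y_Z induced by a memoryless channel Γ(y|x_0,x_1,x_2). Then I(X_{0,Z}; X_{2,Z}) ≤ I(X_{1,Z}; Y_Z | X_{0,Z}, X_{2,Z}). -/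
open Finset

section
variable {Ω α β γ : Type*} [Fintype Ω]

open scoped Classical in
noncomputable def jp (μ : Ω → ℝ) (P : Ω → Prop) : ℝ :=
  ∑ ω, if P ω then μ ω else 0

theorem jp_congr {μ : Ω → ℝ} {P Q : Ω → Prop} (h : ∀ ω, P ω ↔ Q ω) :
    jp μ P = jp μ Q := by
  unfold jp; exact Finset.sum_congr rfl fun ω _ => by
    classical
    simp only [h ω]

theorem jp_nonneg {μ : Ω → ℝ} (h0 : ∀ ω, 0 ≤ μ ω) (P : Ω → Prop) : 0 ≤ jp μ P := by
  classical
  refine Finset.sum_nonneg fun ω _ => ?_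
  split <;> simp [h0]

theorem jp_mono {μ : Ω → ℝ} (h0 : ∀ ω, 0 ≤ μ ω) {P Q : Ω → Prop}
    (h : ∀ ω, P ω → Q ω) : jp μ P ≤ jp μ Q := by
  classical
  refine Finset.sum_le_sum fun ω _ => ?_
  by_cases hp : P ω
  · simp [hp, h ω hp]
  · simp only [hp, if_false]
    split <;> simp [h0]

theorem le_jp {μ : Ω → ℝ} (h0 : ∀ ω, 0 ≤ μ ω) {P : Ω → Prop} {ω₀ : Ω} (h : P ω₀) :
    μ ω₀ ≤ jp μ P := by
  classical
  unfold jp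
  calc μ ω₀ = if P ω₀ then μ ω₀ else 0 := by simp [h]
  _ ≤ _ := Finset.single_le_sum (f := fun ω => if P ω then μ ω else 0)
      (fun ω _ => by split <;> simp [h0]) (mem_univ ω₀)

theorem jp_pos {μ : Ω → ℝ} (h0 : ∀ ω, 0 ≤ μ ω) {P : Ω → Prop} {ω₀ : Ω} (h : P ω₀)
    (hω : μ ω₀ ≠ 0) : 0 < jp μ P :=
  lt_of_lt_of_le (lt_of_le_of_ne (h0 ω₀) (Ne.symm hω)) (le_jp h0 h)

/-- decompose a jp along the fibers of a map `V`. -/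
theorem jp_fiber [Fintype α] [DecidableEq α] {μ : Ω → ℝ} (P : Ω → Prop) (V : Ω → α) :
    jp μ P = ∑ v, jp μ (fun ω => V ω = v ∧ P ω) := by
  classical
  unfold jp
  rw [Finset.sum_comm]
  refine Finset.sum_congr rfl fun ω _ => ?_
  by_cases hp : P ω <;> simp [hp]

/-- sum of `μ ω * f (V ω)` as a sum over values. -/
theorem sum_mul_comp [Fintype α] [DecidableEq α] {μ : Ω → ℝ} (V : Ω → α) (f : α → ℝ) :
    ∑ ω, μ ω * f (V ω) = ∑ v, jp μ (fun ω => V ω = v) * f v := by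
  classical
  unfold jp
  simp only [Finset.sum_mul]
  rw [Finset.sum_comm]
  refine Finset.sum_congr rfl fun ω _ => ?_
  simp

theorem pr_eq_jp [DecidableEq α] {μ : Ω → ℝ} (X : Ω → α) (x : α) :
    pr μ X x = jp μ (fun ω => X ω = x) := by
  unfold pr jp; exact Finset.sum_congr rfl fun ω _ => by congr

/-- pointwise form of the entropy. -/
theorem Hent_eq [Fintype α] [DecidableEq α] (μ : Ω → ℝ) (X : Ω → α) :
    Hent μ X = -∑ ω, μ ω * Real.log (jp μ (fun ω' => X ω' = X ω)) := by
  classical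
  have : ∑ ω, μ ω * Real.log (jp μ (fun ω' => X ω' = X ω))
      = ∑ x, jp μ (fun ω => X ω = x) * Real.log (jp μ (fun ω' => X ω' = x)) :=
    sum_mul_comp X (fun x => Real.log (jp μ (fun ω' => X ω' = x)))
  rw [Hent, this]
  congr 1
  exact Finset.sum_congr rfl fun x _ => by rw [pr_eq_jp]

end

section
variable {Ω α β γ δ : Type*} [Fintype Ω]
variable [Fintype α] [DecidableEq α] [Fintype β] [DecidableEq β]
variable [Fintype γ] [DecidableEq γ] [Fintype δ] [DecidableEq δ]

theorem condMI_eq (μ : Ω → ℝ) (X : Ω → α) (Y : Ω → β) (Z : Ω → γ) :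
    condMI μ X Y Z = ∑ ω, μ ω *
      (Real.log (jp μ (fun ω' => X ω' = X ω ∧ Y ω' = Y ω ∧ Z ω' = Z ω))
       + Real.log (jp μ (fun ω' => Z ω' = Z ω))
       - Real.log (jp μ (fun ω' => X ω' = X ω ∧ Z ω' = Z ω))
       - Real.log (jp μ (fun ω' => Y ω' = Y ω ∧ Z ω' = Z ω))) := by
  have hXYZ : Hent μ (fun ω => ((X ω, Y ω), Z ω)) =
      -∑ ω, μ ω * Real.log (jp μ (fun ω' => X ω' = X ω ∧ Y ω' = Y ω ∧ Z ω' = Z ω)) := by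
    rw [Hent_eq]; congr 1
    exact Finset.sum_congr rfl fun ω _ => congrArg (fun r => μ ω * Real.log r)
      (jp_congr fun ω' => by simp [Prod.ext_iff, and_assoc])
  have hXZ : Hent μ (fun ω => (X ω, Z ω)) =
      -∑ ω, μ ω * Real.log (jp μ (fun ω' => X ω' = X ω ∧ Z ω' = Z ω)) := by
    rw [Hent_eq]; congr 1
    exact Finset.sum_congr rfl fun ω _ => congrArg (fun r => μ ω * Real.log r)
      (jp_congr fun ω' => by simp [Prod.ext_iff])
  have hYZ : Hent μ (fun ω => (Y ω, Z ω)) =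
      -∑ ω, μ ω * Real.log (jp μ (fun ω' => Y ω' = Y ω ∧ Z ω' = Z ω)) := by
    rw [Hent_eq]; congr 1
    exact Finset.sum_congr rfl fun ω _ => congrArg (fun r => μ ω * Real.log r)
      (jp_congr fun ω' => by simp [Prod.ext_iff])
  have hZ : Hent μ Z = -∑ ω, μ ω * Real.log (jp μ (fun ω' => Z ω' = Z ω)) := Hent_eq μ Z
  unfold condMI condH
  rw [hXYZ, hZ, hXZ, hYZ]
  have : ∀ s1 s2 s3 s4 : ℝ, -s3 - -s2 + (-s4 - -s2) - (-s1 - -s2) = s1 + s2 - s3 - s4 := by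
    intros; ring
  rw [this]
  rw [← Finset.sum_add_distrib, ← Finset.sum_sub_distrib, ← Finset.sum_sub_distrib]
  exact Finset.sum_congr rfl fun ω _ => by ring

theorem MI_eq (μ : Ω → ℝ) (X : Ω → α) (Y : Ω → β) :
    MI μ X Y = ∑ ω, μ ω *
      (Real.log (jp μ (fun ω' => X ω' = X ω ∧ Y ω' = Y ω))
       - Real.log (jp μ (fun ω' => X ω' = X ω))
       - Real.log (jp μ (fun ω' => Y ω' = Y ω))) := by
  have hXY : Hent μ (fun ω => (X ω, Y ω)) =
      -∑ ω, μ ω * Real.log (jp μ (fun ω' => X ω' = X ω ∧ Y ω' = Y ω)) := by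
    rw [Hent_eq]; congr 1
    exact Finset.sum_congr rfl fun ω _ => congrArg (fun r => μ ω * Real.log r)
      (jp_congr fun ω' => by simp [Prod.ext_iff])
  unfold MI
  rw [hXY, Hent_eq μ X, Hent_eq μ Y]
  have : ∀ s1 s2 s3 : ℝ, -s2 + -s3 - -s1 = s1 - s2 - s3 := by intros; ring
  rw [this]
  rw [← Finset.sum_sub_distrib, ← Finset.sum_sub_distrib]
  exact Finset.sum_congr rfl fun ω _ => by ring

/-- congruence for `condMI` under pointwise fiber equivalence of the three maps. -/
theorem condMI_congr {α' β' γ' : Type*} [Fintype α'] [DecidableEq α']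
    [Fintype β'] [DecidableEq β'] [Fintype γ'] [DecidableEq γ']
    (μ : Ω → ℝ) {X : Ω → α} {Y : Ω → β} {Z : Ω → γ}
    {X' : Ω → α'} {Y' : Ω → β'} {Z' : Ω → γ'}
    (hX : ∀ ω' ω, X ω' = X ω ↔ X' ω' = X' ω)
    (hY : ∀ ω' ω, Y ω' = Y ω ↔ Y' ω' = Y' ω)
    (hZ : ∀ ω' ω, Z ω' = Z ω ↔ Z' ω' = Z' ω) :
    condMI μ X Y Z = condMI μ X' Y' Z' := by
  rw [condMI_eq, condMI_eq]
  refine Finset.sum_congr rfl fun ω _ => ?_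
  rw [jp_congr (fun ω' => by rw [hX ω' ω, hY ω' ω, hZ ω' ω] :
        ∀ ω', (X ω' = X ω ∧ Y ω' = Y ω ∧ Z ω' = Z ω) ↔
          (X' ω' = X' ω ∧ Y' ω' = Y' ω ∧ Z' ω' = Z' ω)),
      jp_congr (fun ω' => hZ ω' ω),
      jp_congr (fun ω' => by rw [hX ω' ω, hZ ω' ω] :
        ∀ ω', (X ω' = X ω ∧ Z ω' = Z ω) ↔ (X' ω' = X' ω ∧ Z' ω' = Z' ω)),
      jp_congr (fun ω' => by rw [hY ω' ω, hZ ω' ω] :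
        ∀ ω', (Y ω' = Y ω ∧ Z ω' = Z ω) ↔ (Y' ω' = Y' ω ∧ Z' ω' = Z' ω))]

theorem condMI_symm (μ : Ω → ℝ) (X : Ω → α) (Y : Ω → β) (Z : Ω → γ) :
    condMI μ X Y Z = condMI μ Y X Z := by
  rw [condMI_eq, condMI_eq]
  refine Finset.sum_congr rfl fun ω _ => ?_
  rw [jp_congr (fun ω' => by tauto :
      ∀ ω', (X ω' = X ω ∧ Y ω' = Y ω ∧ Z ω' = Z ω) ↔
        (Y ω' = Y ω ∧ X ω' = X ω ∧ Z ω' = Z ω))]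
  ring

/-- chain rule : `I(X,W ; Y | Z) = I(X;Y|Z) + I(W;Y|X,Z)`. -/
theorem condMI_chain (μ : Ω → ℝ) (X : Ω → α) (W : Ω → δ) (Y : Ω → β) (Z : Ω → γ) :
    condMI μ (fun ω => (X ω, W ω)) Y Z
      = condMI μ X Y Z + condMI μ W Y (fun ω => (X ω, Z ω)) := by
  rw [condMI_eq, condMI_eq, condMI_eq, ← Finset.sum_add_distrib]
  refine Finset.sum_congr rfl fun ω _ => ?_
  rw [jp_congr (fun ω' => by simp only [Prod.mk.injEq]; tauto :
        ∀ ω', ((X ω', W ω') = (X ω, W ω) ∧ Y ω' = Y ω ∧ Z ω' = Z ω) ↔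
          (X ω' = X ω ∧ W ω' = W ω ∧ Y ω' = Y ω ∧ Z ω' = Z ω)),
      jp_congr (fun ω' => by simp only [Prod.mk.injEq]; tauto :
        ∀ ω', ((X ω', W ω') = (X ω, W ω) ∧ Z ω' = Z ω) ↔
          (X ω' = X ω ∧ W ω' = W ω ∧ Z ω' = Z ω)),
      jp_congr (fun ω' => by simp only [Prod.mk.injEq]; tauto :
        ∀ ω', (W ω' = W ω ∧ Y ω' = Y ω ∧ (X ω', Z ω') = (X ω, Z ω)) ↔
          (X ω' = X ω ∧ W ω' = W ω ∧ Y ω' = Y ω ∧ Z ω' = Z ω)),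
      jp_congr (fun ω' => by simp only [Prod.mk.injEq] :
        ∀ ω', ((X ω', Z ω') = (X ω, Z ω)) ↔ (X ω' = X ω ∧ Z ω' = Z ω)),
      jp_congr (fun ω' => by simp only [Prod.mk.injEq]; tauto :
        ∀ ω', (W ω' = W ω ∧ (X ω', Z ω') = (X ω, Z ω)) ↔
          (X ω' = X ω ∧ W ω' = W ω ∧ Z ω' = Z ω)),
      jp_congr (fun ω' => by simp only [Prod.mk.injEq]; tauto :
        ∀ ω', (Y ω' = Y ω ∧ (X ω', Z ω') = (X ω, Z ω)) ↔
          (X ω' = X ω ∧ Y ω' = Y ω ∧ Z ω' = Z ω))]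
  ring

end

section
variable {Ω α β γ δ : Type*} [Fintype Ω]
variable [Fintype α] [DecidableEq α] [Fintype β] [DecidableEq β]
variable [Fintype γ] [DecidableEq γ] [Fintype δ] [DecidableEq δ]

theorem log_ge_aux {x : ℝ} (hx : 0 < x) : 1 - 1/x ≤ Real.log x := by
  have h := Real.log_le_sub_one_of_pos (x := 1/x) (by positivity)
  rw [Real.log_div one_ne_zero (ne_of_gt hx), Real.log_one] at h
  linarith

theorem condMI_nonneg (μ : Ω → ℝ) (h0 : ∀ ω, 0 ≤ μ ω)
    (X : Ω → α) (Y : Ω → β) (Z : Ω → γ) : 0 ≤ condMI μ X Y Z := by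
  classical
  set Q3 : α × β × γ → ℝ := fun v => jp μ (fun ω' => X ω' = v.1 ∧ Y ω' = v.2.1 ∧ Z ω' = v.2.2) with hQ3
  set QXZ : α × γ → ℝ := fun v => jp μ (fun ω' => X ω' = v.1 ∧ Z ω' = v.2) with hQXZ
  set QYZ : β × γ → ℝ := fun v => jp μ (fun ω' => Y ω' = v.1 ∧ Z ω' = v.2) with hQYZ
  set Q1 : γ → ℝ := fun z => jp μ (fun ω' => Z ω' = z) with hQ1
  set r : α × β × γ → ℝ := fun v => QXZ (v.1, v.2.2) * QYZ v.2 / (Q3 v * Q1 v.2.2) with hr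
  have step1 : ∑ ω, μ ω * (1 - r (X ω, Y ω, Z ω)) ≤ condMI μ X Y Z := by
    rw [condMI_eq]
    refine Finset.sum_le_sum fun ω _ => ?_
    rcases eq_or_ne (μ ω) 0 with hω | hω
    · simp [hω]
    have p3 : 0 < Q3 (X ω, Y ω, Z ω) := jp_pos h0 ⟨rfl, rfl, rfl⟩ hω
    have pXZ : 0 < QXZ (X ω, Z ω) := jp_pos h0 ⟨rfl, rfl⟩ hω
    have pYZ : 0 < QYZ (Y ω, Z ω) := jp_pos h0 ⟨rfl, rfl⟩ hω
    have p1 : 0 < Q1 (Z ω) := jp_pos h0 rfl hω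
    refine mul_le_mul_of_nonneg_left ?_ (h0 ω)
    have hlog : Real.log (Q3 (X ω, Y ω, Z ω)) + Real.log (Q1 (Z ω))
        - Real.log (QXZ (X ω, Z ω)) - Real.log (QYZ (Y ω, Z ω))
        = Real.log (Q3 (X ω, Y ω, Z ω) * Q1 (Z ω) / (QXZ (X ω, Z ω) * QYZ (Y ω, Z ω))) := by
      rw [Real.log_div (by positivity) (by positivity), Real.log_mul (ne_of_gt p3) (ne_of_gt p1),
        Real.log_mul (ne_of_gt pXZ) (ne_of_gt pYZ)]
      ring
    have hlb := log_ge_aux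
      (x := Q3 (X ω, Y ω, Z ω) * Q1 (Z ω) / (QXZ (X ω, Z ω) * QYZ (Y ω, Z ω))) (by positivity)
    have hreq : 1 - r (X ω, Y ω, Z ω)
        = 1 - 1 / (Q3 (X ω, Y ω, Z ω) * Q1 (Z ω) / (QXZ (X ω, Z ω) * QYZ (Y ω, Z ω))) := by
      rw [hr]; field_simp
    rw [hreq, hlog]
    exact hlb
  have step2 : ∑ ω, μ ω * r (X ω, Y ω, Z ω) ≤ ∑ ω, μ ω := by
    rw [sum_mul_comp (fun ω => (X ω, Y ω, Z ω)) r]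
    have hQ3v : ∀ v : α × β × γ, jp μ (fun ω => (X ω, Y ω, Z ω) = v) = Q3 v := by
      intro v; exact jp_congr fun ω => by simp [Prod.ext_iff]
    simp only [hQ3v]
    set S : α × β × γ → ℝ := fun v =>
      if Q1 v.2.2 = 0 then 0 else QXZ (v.1, v.2.2) * QYZ v.2 / Q1 v.2.2 with hS
    have hterm : ∀ v : α × β × γ, Q3 v * r v ≤ S v := by
      intro v
      rcases eq_or_ne (Q3 v) 0 with h3 | h3
      · rw [h3, zero_mul, hS]
        dsimp only
        split
        · exact le_refl 0
        · exact div_nonneg (mul_nonneg (jp_nonneg h0 _) (jp_nonneg h0 _)) (jp_nonneg h0 _)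
      · have p3 : 0 < Q3 v := lt_of_le_of_ne (jp_nonneg h0 _) (Ne.symm h3)
        have p1 : 0 < Q1 v.2.2 := lt_of_lt_of_le p3 (jp_mono h0 fun ω h => h.2.2)
        have heq : Q3 v * r v = QXZ (v.1, v.2.2) * QYZ v.2 / Q1 v.2.2 := by
          rw [hr]; field_simp
        rw [heq, hS]
        dsimp only
        rw [if_neg (ne_of_gt p1)]
    have hmargX : ∀ z, ∑ x, QXZ (x, z) = Q1 z := by
      intro z
      rw [hQXZ, hQ1]
      dsimp only
      exact (jp_fiber (fun ω' => Z ω' = z) X).symm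
    have hmargY : ∀ z, ∑ y, QYZ (y, z) = Q1 z := by
      intro z
      rw [hQYZ, hQ1]
      dsimp only
      exact (jp_fiber (fun ω' => Z ω' = z) Y).symm
    have e3 : ∀ z, (∑ x, ∑ y, S (x, y, z)) = if Q1 z = 0 then 0 else Q1 z := by
      intro z
      rcases eq_or_ne (Q1 z) 0 with h | h
      · simp [hS, h]
      · rw [if_neg h]
        have hrow : ∀ x, ∑ y, S (x, y, z) = QXZ (x, z) * Q1 z / Q1 z := by
          intro x
          rw [show (∑ y, S (x, y, z)) = ∑ y, QXZ (x, z) * QYZ (y, z) / Q1 z from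
            Finset.sum_congr rfl fun y _ => by rw [hS]; exact if_neg h]
          rw [← Finset.sum_div, ← Finset.mul_sum, hmargY z]
        simp only [hrow]
        rw [← Finset.sum_div, ← Finset.sum_mul, hmargX z]
        field_simp
    have hsumS : ∑ v : α × β × γ, S v = ∑ z, if Q1 z = 0 then 0 else Q1 z := by
      have e1 : ∑ v : α × β × γ, S v = ∑ x, ∑ y, ∑ z, S (x, y, z) := by
        rw [Fintype.sum_prod_type]
        exact Finset.sum_congr rfl fun x _ => Fintype.sum_prod_type _
      have e2 : (∑ x, ∑ y, ∑ z, S (x, y, z)) = ∑ z, ∑ x, ∑ y, S (x, y, z) := by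
        rw [show (∑ x, ∑ y, ∑ z, S (x, y, z)) = ∑ x, ∑ z, ∑ y, S (x, y, z) from
          Finset.sum_congr rfl fun x _ => Finset.sum_comm]
        exact Finset.sum_comm
      rw [e1, e2]
      exact Finset.sum_congr rfl fun z _ => e3 z
    have hZtot : ∑ z, Q1 z = ∑ ω, μ ω := by
      have htrue : jp μ (fun _ => True) = ∑ ω, μ ω := by simp [jp]
      rw [jp_fiber (fun _ => True) Z] at htrue
      rw [← htrue]
      exact Finset.sum_congr rfl fun z _ => jp_congr fun ω => by simp
    calc ∑ v : α × β × γ, Q3 v * r v ≤ ∑ v : α × β × γ, S v :=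
          Finset.sum_le_sum fun v _ => hterm v
      _ = ∑ z, if Q1 z = 0 then 0 else Q1 z := hsumS
      _ ≤ ∑ z, Q1 z := Finset.sum_le_sum fun z _ => by
          split
          · exact jp_nonneg h0 _
          · exact le_refl _
      _ = ∑ ω, μ ω := hZtot
  have hfin : ∑ ω, μ ω * (1 - r (X ω, Y ω, Z ω))
      = ∑ ω, μ ω - ∑ ω, μ ω * r (X ω, Y ω, Z ω) := by
    rw [← Finset.sum_sub_distrib]
    exact Finset.sum_congr rfl fun ω _ => by ring
  calc (0:ℝ) ≤ ∑ ω, μ ω * (1 - r (X ω, Y ω, Z ω)) := by rw [hfin]; linarith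
    _ ≤ condMI μ X Y Z := step1

theorem condMI_zero_of_fac (μ : Ω → ℝ) (h0 : ∀ ω, 0 ≤ μ ω)
    (X : Ω → α) (Y : Ω → β) (Z : Ω → γ)
    (h : ∀ ω, μ ω ≠ 0 →
      jp μ (fun ω' => X ω' = X ω ∧ Y ω' = Y ω ∧ Z ω' = Z ω) * jp μ (fun ω' => Z ω' = Z ω)
        = jp μ (fun ω' => X ω' = X ω ∧ Z ω' = Z ω) * jp μ (fun ω' => Y ω' = Y ω ∧ Z ω' = Z ω)) :
    condMI μ X Y Z = 0 := by
  rw [condMI_eq]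
  refine Finset.sum_eq_zero fun ω _ => ?_
  rcases eq_or_ne (μ ω) 0 with hω | hω
  · simp [hω]
  have p3 : 0 < jp μ (fun ω' => X ω' = X ω ∧ Y ω' = Y ω ∧ Z ω' = Z ω) :=
    jp_pos h0 ⟨rfl, rfl, rfl⟩ hω
  have pXZ : 0 < jp μ (fun ω' => X ω' = X ω ∧ Z ω' = Z ω) := jp_pos h0 ⟨rfl, rfl⟩ hω
  have pYZ : 0 < jp μ (fun ω' => Y ω' = Y ω ∧ Z ω' = Z ω) := jp_pos h0 ⟨rfl, rfl⟩ hω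
  have p1 : 0 < jp μ (fun ω' => Z ω' = Z ω) := jp_pos h0 rfl hω
  have e : Real.log (jp μ (fun ω' => X ω' = X ω ∧ Y ω' = Y ω ∧ Z ω' = Z ω))
      + Real.log (jp μ (fun ω' => Z ω' = Z ω))
      - Real.log (jp μ (fun ω' => X ω' = X ω ∧ Z ω' = Z ω))
      - Real.log (jp μ (fun ω' => Y ω' = Y ω ∧ Z ω' = Z ω)) = 0 := by
    rw [← Real.log_mul (ne_of_gt p3) (ne_of_gt p1), h ω hω,
      Real.log_mul (ne_of_gt pXZ) (ne_of_gt pYZ)]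
    ring
  rw [e, mul_zero]

theorem MI_zero_of_fac (μ : Ω → ℝ) (h0 : ∀ ω, 0 ≤ μ ω)
    (X : Ω → α) (Y : Ω → β)
    (h : ∀ ω, μ ω ≠ 0 →
      jp μ (fun ω' => X ω' = X ω ∧ Y ω' = Y ω)
        = jp μ (fun ω' => X ω' = X ω) * jp μ (fun ω' => Y ω' = Y ω)) :
    MI μ X Y = 0 := by
  rw [MI_eq]
  refine Finset.sum_eq_zero fun ω _ => ?_
  rcases eq_or_ne (μ ω) 0 with hω | hω
  · simp [hω]
  have pX : 0 < jp μ (fun ω' => X ω' = X ω) := jp_pos h0 rfl hω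
  have pY : 0 < jp μ (fun ω' => Y ω' = Y ω) := jp_pos h0 rfl hω
  have e : Real.log (jp μ (fun ω' => X ω' = X ω ∧ Y ω' = Y ω))
      - Real.log (jp μ (fun ω' => X ω' = X ω))
      - Real.log (jp μ (fun ω' => Y ω' = Y ω)) = 0 := by
    rw [h ω hω, Real.log_mul (ne_of_gt pX) (ne_of_gt pY)]
    ring
  rw [e, mul_zero]

theorem MI_eq_condMI (μ : Ω → ℝ) (h1 : ∑ ω, μ ω = 1) (X : Ω → α) (Y : Ω → β) :
    MI μ X Y = condMI μ X Y (fun _ => ()) := by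
  rw [MI_eq, condMI_eq]
  refine Finset.sum_congr rfl fun ω _ => ?_
  have h3 : jp μ (fun ω' => X ω' = X ω ∧ Y ω' = Y ω ∧ () = ())
      = jp μ (fun ω' => X ω' = X ω ∧ Y ω' = Y ω) := jp_congr fun ω' => by simp
  have hX : jp μ (fun ω' => X ω' = X ω ∧ () = ())
      = jp μ (fun ω' => X ω' = X ω) := jp_congr fun ω' => by simp
  have hY : jp μ (fun ω' => Y ω' = Y ω ∧ () = ())
      = jp μ (fun ω' => Y ω' = Y ω) := jp_congr fun ω' => by simp
  have hU : jp μ (fun _ : Ω => () = ()) = 1 := by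
    rw [show jp μ (fun _ : Ω => () = ()) = jp μ (fun _ => True) from
      jp_congr fun ω' => by simp]
    simpa [jp] using h1
  rw [h3, hX, hY, hU, Real.log_one]
  ring

theorem condMI_le_pair_left (μ : Ω → ℝ) (h0 : ∀ ω, 0 ≤ μ ω)
    (X : Ω → α) (W : Ω → δ) (Y : Ω → β) (Z : Ω → γ) :
    condMI μ X Y Z ≤ condMI μ (fun ω => (X ω, W ω)) Y Z := by
  rw [condMI_chain]
  have := condMI_nonneg μ h0 W Y (fun ω => (X ω, Z ω))
  linarith

theorem condMI_zero_of_det (μ : Ω → ℝ) (h0 : ∀ ω, 0 ≤ μ ω)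
    (X : Ω → α) (Y : Ω → β) (Z : Ω → γ)
    (h : ∀ ω' ω, Z ω' = Z ω → Y ω' = Y ω) : condMI μ X Y Z = 0 := by
  refine condMI_zero_of_fac μ h0 X Y Z fun ω _ => ?_
  rw [jp_congr (fun ω' => by exact ⟨fun hh => ⟨hh.1, hh.2.2⟩, fun hh => ⟨hh.1, h ω' ω hh.2, hh.2⟩⟩ :
        ∀ ω', (X ω' = X ω ∧ Y ω' = Y ω ∧ Z ω' = Z ω) ↔ (X ω' = X ω ∧ Z ω' = Z ω)),
      jp_congr (fun ω' => by exact ⟨fun hh => hh.2, fun hh => ⟨h ω' ω hh, hh⟩⟩ :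
        ∀ ω', (Y ω' = Y ω ∧ Z ω' = Z ω) ↔ (Z ω' = Z ω))]

theorem condMI_zero_left_const (μ : Ω → ℝ) (h0 : ∀ ω, 0 ≤ μ ω)
    (X : Ω → α) (Y : Ω → β) (Z : Ω → γ)
    (h : ∀ ω' ω, X ω' = X ω) : condMI μ X Y Z = 0 := by
  refine condMI_zero_of_fac μ h0 X Y Z fun ω _ => ?_
  rw [jp_congr (fun ω' => by exact ⟨fun hh => hh.2, fun hh => ⟨h ω' ω, hh⟩⟩ :
        ∀ ω', (X ω' = X ω ∧ Y ω' = Y ω ∧ Z ω' = Z ω) ↔ (Y ω' = Y ω ∧ Z ω' = Z ω)),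
      jp_congr (fun ω' => by exact ⟨fun hh => hh.2, fun hh => ⟨h ω' ω, hh⟩⟩ :
        ∀ ω', (X ω' = X ω ∧ Z ω' = Z ω) ↔ (Z ω' = Z ω))]
  ring

theorem condMI_le_of_det (μ : Ω → ℝ) (h0 : ∀ ω, 0 ≤ μ ω)
    (X : Ω → α) (Y : Ω → β) (W : Ω → δ) (Z : Ω → γ)
    (hdet : ∀ ω' ω, W ω' = W ω → Z ω' = Z ω → Y ω' = Y ω) :
    condMI μ X Y Z ≤ condMI μ X W Z := by
  have h1 : condMI μ X Y Z ≤ condMI μ X (fun ω => (Y ω, W ω)) Z := by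
    rw [condMI_symm μ X Y Z, condMI_symm μ X _ Z]
    exact condMI_le_pair_left μ h0 Y W X Z
  have h2 : condMI μ X (fun ω => (Y ω, W ω)) Z = condMI μ X W Z := by
    rw [condMI_symm μ X _ Z,
      condMI_congr μ (X := fun ω => (Y ω, W ω)) (X' := fun ω => (W ω, Y ω))
        (Y := X) (Y' := X) (Z := Z) (Z' := Z)
        (fun ω' ω => by simp only [Prod.mk.injEq]; tauto)
        (fun ω' ω => Iff.rfl) (fun ω' ω => Iff.rfl),
      condMI_chain, condMI_symm μ W X Z]
    have hz : condMI μ Y X (fun ω => (W ω, Z ω)) = 0 := by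
      rw [condMI_symm]
      exact condMI_zero_of_det μ h0 X Y _ fun ω' ω hh => by
        rw [Prod.mk.injEq] at hh
        exact hdet ω' ω hh.1 hh.2
    rw [hz]
    ring
  linarith

end

section
variable {Ω₀ α β γ : Type*} [Fintype Ω₀] {T : ℕ}
variable [Fintype α] [DecidableEq α] [Fintype β] [DecidableEq β]
variable [Fintype γ] [DecidableEq γ]

theorem jp_slice (μ : Ω₀ → ℝ) (μ' : Ω₀ × Fin T → ℝ)
    (hμ' : ∀ ω t, μ' (ω, t) = μ ω / T) (P : Ω₀ → Prop) (t : Fin T) :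
    jp μ' (fun p => P p.1 ∧ p.2 = t) = jp μ P / T := by
  classical
  unfold jp
  rw [Fintype.sum_prod_type, Finset.sum_div]
  refine Finset.sum_congr rfl fun ω _ => ?_
  by_cases hp : P ω
  · simp [hp, hμ']
  · simp [hp]

theorem jp_unslice (μ : Ω₀ → ℝ) (μ' : Ω₀ × Fin T → ℝ)
    (hμ' : ∀ ω t, μ' (ω, t) = μ ω / T) (P : Ω₀ × Fin T → Prop) :
    jp μ' P = (∑ t : Fin T, jp μ (fun ω => P (ω, t))) / T := by
  classical
  unfold jp
  rw [Fintype.sum_prod_type, Finset.sum_comm, Finset.sum_div]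
  refine Finset.sum_congr rfl fun t _ => ?_
  rw [Finset.sum_div]
  refine Finset.sum_congr rfl fun ω _ => ?_
  by_cases hp : P (ω, t)
  · simp [hp, hμ']
  · simp [hp]

theorem condMI_tensor (μ : Ω₀ → ℝ) (μ' : Ω₀ × Fin T → ℝ)
    (hμ' : ∀ ω t, μ' (ω, t) = μ ω / T) (h0 : ∀ ω, 0 ≤ μ ω) (hT : 0 < T)
    (u : Fin T → Ω₀ → α) (v : Fin T → Ω₀ → β) (w : Fin T → Ω₀ → γ) :
    condMI μ' (fun p => u p.2 p.1) (fun p => v p.2 p.1) (fun p => (w p.2 p.1, p.2))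
      = (∑ t, condMI μ (u t) (v t) (w t)) / T := by
  classical
  have hTne : (T : ℝ) ≠ 0 := Nat.cast_ne_zero.mpr hT.ne'
  rw [condMI_eq, Fintype.sum_prod_type, Finset.sum_comm, Finset.sum_div]
  refine Finset.sum_congr rfl fun t _ => ?_
  rw [condMI_eq, Finset.sum_div]
  refine Finset.sum_congr rfl fun ω _ => ?_
  rw [hμ']
  rcases eq_or_ne (μ ω) 0 with hω | hω
  · simp [hω]
  have e3 : jp μ' (fun p => u p.2 p.1 = u t ω ∧ v p.2 p.1 = v t ω
        ∧ (w p.2 p.1, p.2) = (w t ω, t))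
      = jp μ (fun ω' => u t ω' = u t ω ∧ v t ω' = v t ω ∧ w t ω' = w t ω) / T := by
    rw [jp_congr (Q := fun p : Ω₀ × Fin T =>
        (u t p.1 = u t ω ∧ v t p.1 = v t ω ∧ w t p.1 = w t ω) ∧ p.2 = t)
      (fun p => by
        obtain ⟨ω', t'⟩ := p
        constructor
        · rintro ⟨h1, h2, h3⟩
          rw [Prod.mk.injEq] at h3
          obtain ⟨h3a, h3b⟩ := h3
          subst h3b
          exact ⟨⟨h1, h2, h3a⟩, rfl⟩
        · rintro ⟨⟨h1, h2, h3⟩, h4⟩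
          dsimp only at h4 ⊢
          subst h4
          exact ⟨h1, h2, by rw [Prod.mk.injEq]; exact ⟨h3, rfl⟩⟩)]
    exact jp_slice μ μ' hμ' (fun ω' => u t ω' = u t ω ∧ v t ω' = v t ω ∧ w t ω' = w t ω) t
  have e1 : jp μ' (fun p => (w p.2 p.1, p.2) = (w t ω, t))
      = jp μ (fun ω' => w t ω' = w t ω) / T := by
    rw [jp_congr (Q := fun p : Ω₀ × Fin T => (w t p.1 = w t ω) ∧ p.2 = t)
      (fun p => by
        obtain ⟨ω', t'⟩ := p
        constructor
        · rintro h3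
          rw [Prod.mk.injEq] at h3
          obtain ⟨h3a, h3b⟩ := h3
          subst h3b
          exact ⟨h3a, rfl⟩
        · rintro ⟨h3, h4⟩
          dsimp only at h4 ⊢
          subst h4
          rw [Prod.mk.injEq]
          exact ⟨h3, rfl⟩)]
    exact jp_slice μ μ' hμ' (fun ω' => w t ω' = w t ω) t
  have eXZ : jp μ' (fun p => u p.2 p.1 = u t ω ∧ (w p.2 p.1, p.2) = (w t ω, t))
      = jp μ (fun ω' => u t ω' = u t ω ∧ w t ω' = w t ω) / T := by
    rw [jp_congr (Q := fun p : Ω₀ × Fin T =>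
        (u t p.1 = u t ω ∧ w t p.1 = w t ω) ∧ p.2 = t)
      (fun p => by
        obtain ⟨ω', t'⟩ := p
        constructor
        · rintro ⟨h1, h3⟩
          rw [Prod.mk.injEq] at h3
          obtain ⟨h3a, h3b⟩ := h3
          subst h3b
          exact ⟨⟨h1, h3a⟩, rfl⟩
        · rintro ⟨⟨h1, h3⟩, h4⟩
          dsimp only at h4 ⊢
          subst h4
          exact ⟨h1, by rw [Prod.mk.injEq]; exact ⟨h3, rfl⟩⟩)]
    exact jp_slice μ μ' hμ' (fun ω' => u t ω' = u t ω ∧ w t ω' = w t ω) t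
  have eYZ : jp μ' (fun p => v p.2 p.1 = v t ω ∧ (w p.2 p.1, p.2) = (w t ω, t))
      = jp μ (fun ω' => v t ω' = v t ω ∧ w t ω' = w t ω) / T := by
    rw [jp_congr (Q := fun p : Ω₀ × Fin T =>
        (v t p.1 = v t ω ∧ w t p.1 = w t ω) ∧ p.2 = t)
      (fun p => by
        obtain ⟨ω', t'⟩ := p
        constructor
        · rintro ⟨h1, h3⟩
          rw [Prod.mk.injEq] at h3
          obtain ⟨h3a, h3b⟩ := h3
          subst h3b
          exact ⟨⟨h1, h3a⟩, rfl⟩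
        · rintro ⟨⟨h1, h3⟩, h4⟩
          dsimp only at h4 ⊢
          subst h4
          exact ⟨h1, by rw [Prod.mk.injEq]; exact ⟨h3, rfl⟩⟩)]
    exact jp_slice μ μ' hμ' (fun ω' => v t ω' = v t ω ∧ w t ω' = w t ω) t
  rw [e3, e1, eXZ, eYZ]
  have p3 : 0 < jp μ (fun ω' => u t ω' = u t ω ∧ v t ω' = v t ω ∧ w t ω' = w t ω) :=
    jp_pos h0 ⟨rfl, rfl, rfl⟩ hω
  have p1 : 0 < jp μ (fun ω' => w t ω' = w t ω) := jp_pos h0 rfl hω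
  have pXZ : 0 < jp μ (fun ω' => u t ω' = u t ω ∧ w t ω' = w t ω) := jp_pos h0 ⟨rfl, rfl⟩ hω
  have pYZ : 0 < jp μ (fun ω' => v t ω' = v t ω ∧ w t ω' = w t ω) := jp_pos h0 ⟨rfl, rfl⟩ hω
  rw [Real.log_div (ne_of_gt p3) hTne, Real.log_div (ne_of_gt p1) hTne,
    Real.log_div (ne_of_gt pXZ) hTne, Real.log_div (ne_of_gt pYZ) hTne]
  ring

theorem condMI_tensorZ (μ : Ω₀ → ℝ) (μ' : Ω₀ × Fin T → ℝ)
    (hμ' : ∀ ω t, μ' (ω, t) = μ ω / T) (h0 : ∀ ω, 0 ≤ μ ω) (hT : 0 < T)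
    (h1 : ∑ ω, μ ω = 1)
    (u : Fin T → Ω₀ → α) (v : Fin T → Ω₀ → β) :
    condMI μ' (fun p => u p.2 p.1) (fun p => v p.2 p.1) (fun p => p.2)
      = (∑ t, MI μ (u t) (v t)) / T := by
  classical
  have hTne : (T : ℝ) ≠ 0 := Nat.cast_ne_zero.mpr hT.ne'
  rw [condMI_eq, Fintype.sum_prod_type, Finset.sum_comm, Finset.sum_div]
  refine Finset.sum_congr rfl fun t _ => ?_
  rw [MI_eq, Finset.sum_div]
  refine Finset.sum_congr rfl fun ω _ => ?_
  rw [hμ']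
  rcases eq_or_ne (μ ω) 0 with hω | hω
  · simp [hω]
  have e3 : jp μ' (fun p => u p.2 p.1 = u t ω ∧ v p.2 p.1 = v t ω ∧ p.2 = t)
      = jp μ (fun ω' => u t ω' = u t ω ∧ v t ω' = v t ω) / T := by
    rw [jp_congr (Q := fun p : Ω₀ × Fin T =>
        (u t p.1 = u t ω ∧ v t p.1 = v t ω) ∧ p.2 = t)
      (fun p => by
        obtain ⟨ω', t'⟩ := p
        constructor
        · rintro ⟨h1', h2, h3⟩
          dsimp only at h3 ⊢
          subst h3
          exact ⟨⟨h1', h2⟩, rfl⟩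
        · rintro ⟨⟨h1', h2⟩, h4⟩
          dsimp only at h4 ⊢
          subst h4
          exact ⟨h1', h2, rfl⟩)]
    exact jp_slice μ μ' hμ' (fun ω' => u t ω' = u t ω ∧ v t ω' = v t ω) t
  have e1 : jp μ' (fun p : Ω₀ × Fin T => p.2 = t) = 1 / T := by
    rw [jp_congr (Q := fun p : Ω₀ × Fin T => True ∧ p.2 = t) (fun p => by tauto),
      jp_slice μ μ' hμ' (fun _ => True) t]
    congr 1
    simpa [jp] using h1
  have eXZ : jp μ' (fun p => u p.2 p.1 = u t ω ∧ p.2 = t)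
      = jp μ (fun ω' => u t ω' = u t ω) / T := by
    rw [jp_congr (Q := fun p : Ω₀ × Fin T => (u t p.1 = u t ω) ∧ p.2 = t)
      (fun p => by
        obtain ⟨ω', t'⟩ := p
        constructor
        · rintro ⟨h1', h3⟩
          dsimp only at h3 ⊢
          subst h3
          exact ⟨h1', rfl⟩
        · rintro ⟨h1', h4⟩
          dsimp only at h4 ⊢
          subst h4
          exact ⟨h1', rfl⟩)]
    exact jp_slice μ μ' hμ' (fun ω' => u t ω' = u t ω) t
  have eYZ : jp μ' (fun p => v p.2 p.1 = v t ω ∧ p.2 = t)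
      = jp μ (fun ω' => v t ω' = v t ω) / T := by
    rw [jp_congr (Q := fun p : Ω₀ × Fin T => (v t p.1 = v t ω) ∧ p.2 = t)
      (fun p => by
        obtain ⟨ω', t'⟩ := p
        constructor
        · rintro ⟨h1', h3⟩
          dsimp only at h3 ⊢
          subst h3
          exact ⟨h1', rfl⟩
        · rintro ⟨h1', h4⟩
          dsimp only at h4 ⊢
          subst h4
          exact ⟨h1', rfl⟩)]
    exact jp_slice μ μ' hμ' (fun ω' => v t ω' = v t ω) t
  rw [e3, e1, eXZ, eYZ]
  have p3 : 0 < jp μ (fun ω' => u t ω' = u t ω ∧ v t ω' = v t ω) := jp_pos h0 ⟨rfl, rfl⟩ hω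
  have pXZ : 0 < jp μ (fun ω' => u t ω' = u t ω) := jp_pos h0 rfl hω
  have pYZ : 0 < jp μ (fun ω' => v t ω' = v t ω) := jp_pos h0 rfl hω
  rw [Real.log_div (ne_of_gt p3) hTne, Real.log_div one_ne_zero hTne,
    Real.log_div (ne_of_gt pXZ) hTne, Real.log_div (ne_of_gt pYZ) hTne, Real.log_one]
  ring

end

set_option linter.unusedSectionVars false

def pxF {T : ℕ} {C : Type*} (k : ℕ) (x : Fin T → C) : Fin T → Option C :=
  fun s => if (s : ℕ) < k then some (x s) else none

def sxF {T : ℕ} {C : Type*} (k : ℕ) (x : Fin T → C) : Fin T → Option C :=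
  fun s => if k ≤ (s : ℕ) then some (x s) else none

theorem pxF_eq_iff {T : ℕ} {C : Type*} (k : ℕ) (x x' : Fin T → C) :
    pxF k x = pxF k x' ↔ ∀ s : Fin T, (s : ℕ) < k → x s = x' s := by
  constructor
  · intro h s hs
    have := congrFun h s
    simp only [pxF, if_pos hs] at this
    exact Option.some.inj this
  · intro h
    funext s
    by_cases hs : (s : ℕ) < k
    · simp only [pxF, if_pos hs, h s hs]
    · simp only [pxF, if_neg hs]

theorem sxF_eq_iff {T : ℕ} {C : Type*} (k : ℕ) (x x' : Fin T → C) :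
    sxF k x = sxF k x' ↔ ∀ s : Fin T, k ≤ (s : ℕ) → x s = x' s := by
  constructor
  · intro h s hs
    have := congrFun h s
    simp only [sxF, if_pos hs] at this
    exact Option.some.inj this
  · intro h
    funext s
    by_cases hs : k ≤ (s : ℕ)
    · simp only [sxF, if_pos hs, h s hs]
    · simp only [sxF, if_neg hs]

theorem sxF_succ_iff {T : ℕ} {C : Type*} (k : Fin T) (x x' : Fin T → C) :
    sxF (k : ℕ) x = sxF (k : ℕ) x' ↔ (x k = x' k ∧ sxF ((k : ℕ)+1) x = sxF ((k : ℕ)+1) x') := by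
  rw [sxF_eq_iff, sxF_eq_iff]
  constructor
  · intro h
    exact ⟨h k le_rfl, fun s hs => h s (by omega)⟩
  · rintro ⟨h1, h2⟩ s hs
    rcases eq_or_lt_of_le hs with heq | hlt
    · have : s = k := Fin.ext heq.symm
      rw [this]; exact h1
    · exact h2 s (by omega)

theorem pxF_succ_iff {T : ℕ} {C : Type*} (k : Fin T) (x x' : Fin T → C) :
    pxF ((k : ℕ)+1) x = pxF ((k : ℕ)+1) x' ↔ (x k = x' k ∧ pxF (k : ℕ) x = pxF (k : ℕ) x') := by
  rw [pxF_eq_iff, pxF_eq_iff]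
  constructor
  · intro h
    exact ⟨h k (by omega), fun s hs => h s (by omega)⟩
  · rintro ⟨h1, h2⟩ s hs
    rcases eq_or_lt_of_le (Nat.lt_succ_iff.mp hs) with heq | hlt
    · have : s = k := Fin.ext heq
      rw [this]; exact h1
    · exact h2 s hlt

theorem pxF_zero {T : ℕ} {C : Type*} (x x' : Fin T → C) : pxF 0 x = pxF 0 x' := by
  funext s; simp [pxF]

theorem sxF_top {T : ℕ} {C : Type*} (x x' : Fin T → C) : sxF T x = sxF T x' := by
  funext s
  simp [sxF, Nat.not_le.mpr s.isLt]

section Model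
variable {A A1 A2 B : Type*} [Fintype A] [DecidableEq A] [Fintype A1] [DecidableEq A1]
  [Fintype A2] [DecidableEq A2] [Fintype B] [DecidableEq B] {T : ℕ}
variable (ρ0 : A → ℝ) (Γ : B → A → A1 → A2 → ℝ) (σ : Fin T → (Fin T → A) → A1)
  (τ : (t : Fin T) → (Fin t.val → A) → (Fin t.val → B) → A2)

/-- the channel factor at stage `t`. -/
def gfac (t : Fin T) (x : Fin T → A) (y : Fin T → B) : ℝ :=
  Γ (y t) (x t) (σ t x) (τ t (fun s => x (preIdx t s)) (fun s => y (preIdx t s)))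

theorem gfac_congr (t : Fin T) (x : Fin T → A) {y y' : Fin T → B}
    (h : ∀ s : Fin T, (s : ℕ) ≤ (t : ℕ) → y s = y' s) :
    gfac Γ σ τ t x y = gfac Γ σ τ t x y' := by
  unfold gfac
  rw [h t le_rfl]
  have hpre : (fun s => y (preIdx t s)) = (fun s => y' (preIdx t s)) :=
    funext fun s => h _ (le_of_lt s.isLt)
  rw [hpre]

/-- causal normalization: summing the product of channel factors over all
trajectories that agree with `y0` strictly below `k`. -/
theorem causal_sum (hΓs : ∀ x0 x1 x2, ∑ y, Γ y x0 x1 x2 = 1) (x : Fin T → A) :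
    ∀ (d k : ℕ), T - k ≤ d → ∀ y0 : Fin T → B,
    ∑ y : Fin T → B, (if (∀ t : Fin T, (t : ℕ) < k → y t = y0 t)
        then ∏ t, gfac Γ σ τ t x y else 0)
      = ∏ t : Fin T, (if (t : ℕ) < k then gfac Γ σ τ t x y0 else 1) := by
  intro d
  induction d with
  | zero =>
    intro k hk y0
    have hTk : T ≤ k := by omega
    rw [Finset.sum_eq_single y0]
    · rw [if_pos (fun t _ => rfl)]
      refine Finset.prod_congr rfl fun t _ => ?_
      rw [if_pos (lt_of_lt_of_le t.isLt hTk)]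
    · intro y _ hy
      rw [if_neg]
      intro hall
      exact hy (funext fun t => hall t (lt_of_lt_of_le t.isLt hTk))
    · intro h; exact absurd (Finset.mem_univ y0) h
  | succ d ih =>
    intro k hk y0
    by_cases hkT : T ≤ k
    · exact ih k (by omega) y0
    push_neg at hkT
    set kf : Fin T := ⟨k, hkT⟩ with hkf
    have hsplit : ∀ y : Fin T → B,
        (if (∀ t : Fin T, (t : ℕ) < k → y t = y0 t) then ∏ t, gfac Γ σ τ t x y else 0)
          = ∑ b, if (∀ t : Fin T, (t : ℕ) < k + 1 → y t = Function.update y0 kf b t)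
              then ∏ t, gfac Γ σ τ t x y else 0 := by
      intro y
      rw [Finset.sum_eq_single (y kf)]
      · apply if_congr _ rfl rfl
        constructor
        · intro h t ht
          rcases Nat.lt_succ_iff_lt_or_eq.mp ht with h' | h'
          · rw [Function.update_of_ne (fun he => by have hvv := congrArg Fin.val he; simp [hkf] at hvv; omega) _ _]
            exact h t h'
          · have : t = kf := Fin.ext (by simp [hkf, h'])
            rw [this, Function.update_self]
        · intro h t ht
          have h' := h t (by omega)
          rwa [Function.update_of_ne (fun he => by have hvv := congrArg Fin.val he; simp [hkf] at hvv; omega)] at h'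
      · intro b _ hb
        rw [if_neg]
        intro hall
        have := hall kf (Nat.lt_succ_self k)
        rw [Function.update_self] at this
        exact hb this.symm
      · intro h; exact absurd (Finset.mem_univ (y kf)) h
    rw [Finset.sum_congr rfl fun y _ => hsplit y, Finset.sum_comm]
    have happ : ∀ b, (∑ y : Fin T → B,
        if (∀ t : Fin T, (t : ℕ) < k + 1 → y t = Function.update y0 kf b t)
          then ∏ t, gfac Γ σ τ t x y else 0)
        = (∏ t : Fin T, (if (t : ℕ) < k then gfac Γ σ τ t x y0 else 1))
            * gfac Γ σ τ kf x (Function.update y0 kf b) := by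
      intro b
      rw [ih (k+1) (by omega) (Function.update y0 kf b)]
      have hsplit2 : ∀ t : Fin T,
          (if (t : ℕ) < k + 1 then gfac Γ σ τ t x (Function.update y0 kf b) else 1)
            = (if (t : ℕ) < k then gfac Γ σ τ t x y0 else 1)
              * (if t = kf then gfac Γ σ τ kf x (Function.update y0 kf b) else 1) := by
        intro t
        by_cases h1 : (t : ℕ) < k
        · have hne : t ≠ kf := fun he => by
            have hvv := congrArg Fin.val he; simp [hkf] at hvv; omega
          rw [if_pos (by omega), if_pos h1, if_neg hne, mul_one]
          refine gfac_congr Γ σ τ t x fun s hs => ?_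
          refine Function.update_of_ne (fun he => ?_) _ _
          have hvv := congrArg Fin.val he; simp [hkf] at hvv; omega
        · by_cases h2 : (t : ℕ) = k
          · have : t = kf := Fin.ext (by simp [hkf, h2])
            rw [this, if_pos (Nat.lt_succ_self k), if_neg (Nat.lt_irrefl k), if_pos rfl,
              one_mul]
          · refine ((if_neg (by omega)).trans ?_)
            rw [if_neg h1, if_neg (show t ≠ kf from fun he => by
              have hvv := congrArg Fin.val he; simp [hkf] at hvv; omega), mul_one]
      rw [Finset.prod_congr rfl fun t _ => hsplit2 t, Finset.prod_mul_distrib,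
        Finset.prod_ite_eq' Finset.univ kf (fun _ => gfac Γ σ τ kf x (Function.update y0 kf b))]
      simp
    rw [Finset.sum_congr rfl fun b _ => happ b, ← Finset.mul_sum]
    have hlast : ∑ b, gfac Γ σ τ kf x (Function.update y0 kf b) = 1 := by
      have : ∀ b, gfac Γ σ τ kf x (Function.update y0 kf b)
          = Γ b (x kf) (σ kf x) (τ kf (fun s => x (preIdx kf s)) (fun s => y0 (preIdx kf s))) := by
        intro b
        unfold gfac
        rw [Function.update_self]
        congr 2
        funext s
        refine Function.update_of_ne (fun he => ?_) _ _
        have hlt : (s : ℕ) < k := s.isLt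
        have hvv := congrArg Fin.val he
        simp [hkf, preIdx] at hvv
        omega
      rw [Finset.sum_congr rfl fun b _ => this b]
      exact hΓs _ _ _
    rw [hlast, mul_one]

/-- marginal of a fixed-constraint product measure. -/
theorem prod_marg (hρ0s : ∑ a, ρ0 a = 1) :
    ∀ (d : ℕ) (S : Finset (Fin T)), (Finset.univ \ S).card ≤ d → ∀ h : Fin T → A,
    ∑ x : Fin T → A, (if (∀ s ∈ S, x s = h s) then ∏ t, ρ0 (x t) else 0)
      = ∏ s ∈ S, ρ0 (h s) := by
  intro d
  induction d with
  | zero =>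
    intro S hS h
    have hU : S = Finset.univ := by
      have hS0 : (Finset.univ \ S).card = 0 := Nat.le_zero.mp hS
      rw [Finset.card_eq_zero, Finset.sdiff_eq_empty_iff_subset] at hS0
      exact Finset.eq_univ_iff_forall.mpr fun s => hS0 (Finset.mem_univ s)
    subst hU
    rw [Finset.sum_eq_single h]
    · rw [if_pos (fun s _ => rfl)]
    · intro x _ hx
      rw [if_neg]
      intro hall
      exact hx (funext fun s => hall s (Finset.mem_univ s))
    · intro hc; exact absurd (Finset.mem_univ h) hc
  | succ d ih =>
    intro S hS h
    by_cases hU : S = Finset.univ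
    · subst hU
      rw [Finset.sum_eq_single h]
      · rw [if_pos (fun s _ => rfl)]
      · intro x _ hx
        rw [if_neg]
        intro hall
        exact hx (funext fun s => hall s (Finset.mem_univ s))
      · intro hc; exact absurd (Finset.mem_univ h) hc
    obtain ⟨a, ha⟩ : (Finset.univ \ S).Nonempty := by
      rw [Finset.sdiff_nonempty]
      intro hsub
      exact hU (Finset.eq_univ_iff_forall.mpr fun s => hsub (Finset.mem_univ s))
    have haS : a ∉ S := (Finset.mem_sdiff.mp ha).2
    have hsplit : ∀ x : Fin T → A,
        (if (∀ s ∈ S, x s = h s) then ∏ t, ρ0 (x t) else 0)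
          = ∑ b, if (∀ s ∈ insert a S, x s = Function.update h a b s)
              then ∏ t, ρ0 (x t) else 0 := by
      intro x
      rw [Finset.sum_eq_single (x a)]
      · apply if_congr _ rfl rfl
        constructor
        · intro hall s hs
          rcases Finset.mem_insert.mp hs with h' | h'
          · rw [h', Function.update_self]
          · rw [Function.update_of_ne (fun he => haS (by rwa [he] at h')) _ _]
            exact hall s h'
        · intro hall s hs
          have := hall s (Finset.mem_insert_of_mem hs)
          rwa [Function.update_of_ne (fun he => haS (by rwa [he] at hs))] at this
      · intro b _ hb
        rw [if_neg]
        intro hall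
        have := hall a (Finset.mem_insert_self a S)
        rw [Function.update_self] at this
        exact hb this.symm
      · intro hc; exact absurd (Finset.mem_univ (x a)) hc
    rw [Finset.sum_congr rfl fun x _ => hsplit x, Finset.sum_comm]
    have hcard : (Finset.univ \ insert a S).card ≤ d := by
      have h1 : (Finset.univ \ insert a S).card < (Finset.univ \ S).card := by
        apply Finset.card_lt_card
        constructor
        · intro s hs
          rw [Finset.mem_sdiff] at hs ⊢
          exact ⟨hs.1, fun hmem => hs.2 (Finset.mem_insert_of_mem hmem)⟩
        · intro hsub
          have := hsub (Finset.mem_sdiff.mpr ⟨Finset.mem_univ a, haS⟩)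
          rw [Finset.mem_sdiff] at this
          exact this.2 (Finset.mem_insert_self a S)
      omega
    rw [Finset.sum_congr rfl fun b _ => ih (insert a S) hcard (Function.update h a b)]
    have : ∀ b, (∏ s ∈ insert a S, ρ0 (Function.update h a b s))
        = ρ0 b * ∏ s ∈ S, ρ0 (h s) := by
      intro b
      rw [Finset.prod_insert haS, Function.update_self]
      congr 1
      exact Finset.prod_congr rfl fun s hs =>
        congrArg ρ0 (Function.update_of_ne (fun he => haS (by rwa [he] at hs)) _ _)
    rw [Finset.sum_congr rfl fun b _ => this b, ← Finset.sum_mul, hρ0s, one_mul]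

end Model

theorem ite_irrel {α : Sort*} {P : Prop} {h1 h2 : Decidable P} (a b : α) :
    @ite _ P h1 a b = @ite _ P h2 a b := by
  cases Subsingleton.elim h1 h2; rfl

theorem jp_eq_sum' {Ω : Type*} [Fintype Ω] (μ : Ω → ℝ) (P : Ω → Prop)
    {inst : ∀ ω, Decidable (P ω)} :
    jp μ P = ∑ ω, @ite _ (P ω) (inst ω) (μ ω) 0 :=
  Finset.sum_congr rfl fun ω _ => ite_irrel _ _

theorem jp_zero {Ω : Type*} [Fintype Ω] (μ : Ω → ℝ) {P : Ω → Prop}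
    (h : ∀ ω, ¬ P ω) : jp μ P = 0 := by
  classical
  unfold jp
  exact Finset.sum_eq_zero fun ω _ => if_neg (h ω)

section Model2
set_option linter.unusedSectionVars false
variable {A A1 A2 B : Type*} [Fintype A] [DecidableEq A] [Fintype A1] [DecidableEq A1]
  [Fintype A2] [DecidableEq A2] [Fintype B] [DecidableEq B] {T : ℕ}
variable (ρ0 : A → ℝ) (Γ : B → A → A1 → A2 → ℝ) (σ : Fin T → (Fin T → A) → A1)
  (τ : (t : Fin T) → (Fin t.val → A) → (Fin t.val → B) → A2)
variable (μ : (Fin T → A) × (Fin T → B) → ℝ)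

theorem mu_nonneg (hμg : ∀ x0 y, μ (x0, y) = (∏ t, ρ0 (x0 t)) * ∏ t, gfac Γ σ τ t x0 y)
    (hρ0 : ∀ a, 0 ≤ ρ0 a) (hΓ0 : ∀ y x0 x1 x2, 0 ≤ Γ y x0 x1 x2) :
    ∀ ω, 0 ≤ μ ω := by
  rintro ⟨x, y⟩
  rw [hμg]
  apply mul_nonneg
  · exact Finset.prod_nonneg fun t _ => hρ0 _
  · exact Finset.prod_nonneg fun t _ => hΓ0 _ _ _ _

/-- `causal_sum` in `jp` form. -/
theorem causal_sum_jp (hΓs : ∀ x0 x1 x2, ∑ y, Γ y x0 x1 x2 = 1) (x : Fin T → A)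
    (k : ℕ) (y0 : Fin T → B) :
    jp (fun y : Fin T → B => ∏ t : Fin T, gfac Γ σ τ t x y)
        (fun y => ∀ t : Fin T, (t : ℕ) < k → y t = y0 t)
      = ∏ t : Fin T, (if (t : ℕ) < k then gfac Γ σ τ t x y0 else 1) :=
  (jp_eq_sum' _ _).trans (causal_sum Γ σ τ hΓs x T k (by omega) y0)

/-- `prod_marg` in `jp` form. -/
theorem prod_marg_jp (hρ0s : ∑ a, ρ0 a = 1) (S : Finset (Fin T)) (h : Fin T → A) :
    jp (fun x : Fin T → A => ∏ t, ρ0 (x t)) (fun x => ∀ s ∈ S, x s = h s)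
      = ∏ s ∈ S, ρ0 (h s) :=
  (jp_eq_sum' _ _).trans (prod_marg ρ0 hρ0s ((Finset.univ \ S).card) S le_rfl h)

theorem jp_pair_fix (hμg : ∀ x0 y, μ (x0, y) = (∏ t, ρ0 (x0 t)) * ∏ t, gfac Γ σ τ t x0 y)
    (x0 : Fin T → A) (R : (Fin T → B) → Prop) :
    jp μ (fun ω => ω.1 = x0 ∧ R ω.2)
      = (∏ t, ρ0 (x0 t)) * jp (fun y : Fin T → B => ∏ t : Fin T, gfac Γ σ τ t x0 y) R := by
  classical
  unfold jp
  rw [Fintype.sum_prod_type, Finset.sum_eq_single x0, Finset.mul_sum]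
  · refine Finset.sum_congr rfl fun y _ => ?_
    by_cases hy : R y
    · rw [if_pos ⟨rfl, hy⟩, if_pos hy, hμg]
    · rw [if_neg (fun hh => hy hh.2), if_neg hy, mul_zero]
  · intro x _ hx
    exact Finset.sum_eq_zero fun y _ => if_neg (fun hh => hx hh.1)
  · intro hc; exact absurd (Finset.mem_univ x0) hc

theorem sum_causal_trivial [Nonempty B] (hΓs : ∀ x0 x1 x2, ∑ y, Γ y x0 x1 x2 = 1)
    (x0 : Fin T → A) :
    jp (fun y : Fin T → B => ∏ t : Fin T, gfac Γ σ τ t x0 y) (fun _ => True) = 1 := by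
  classical
  set y00 : Fin T → B := Classical.arbitrary _ with hy00
  rw [jp_congr (show ∀ y : Fin T → B,
      True ↔ ∀ t : Fin T, (t : ℕ) < 0 → y t = y00 t from fun y =>
        ⟨fun _ t ht => absurd ht (by omega), fun _ => trivial⟩),
    causal_sum_jp Γ σ τ hΓs x0 0 y00]
  rw [show (∏ t : Fin T, (if (t : ℕ) < 0 then gfac Γ σ τ t x0 y00 else 1))
      = ∏ _t : Fin T, (1:ℝ) from Finset.prod_congr rfl fun t _ => if_neg (by omega)]
  exact Finset.prod_const_one

/-- marginalize out the observations. -/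
theorem margX [Nonempty B]
    (hμg : ∀ x0 y, μ (x0, y) = (∏ t, ρ0 (x0 t)) * ∏ t, gfac Γ σ τ t x0 y)
    (hΓs : ∀ x0 x1 x2, ∑ y, Γ y x0 x1 x2 = 1)
    (P : (Fin T → A) → Prop) :
    jp μ (fun ω => P ω.1) = jp (fun x : Fin T → A => ∏ t, ρ0 (x t)) P := by
  classical
  unfold jp
  rw [Fintype.sum_prod_type]
  refine Finset.sum_congr rfl fun x _ => ?_
  by_cases hx : P x
  · rw [if_pos hx]
    rw [show (∑ y : Fin T → B, if P x then μ (x, y) else 0) = ∑ y : Fin T → B, μ (x, y) from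
      Finset.sum_congr rfl fun y _ => if_pos hx]
    have h1 : ∑ y : Fin T → B, μ (x, y)
        = (∏ t, ρ0 (x t)) * ∑ y : Fin T → B,
            (if True then ∏ t : Fin T, gfac Γ σ τ t x y else 0) := by
      rw [Finset.mul_sum]
      exact Finset.sum_congr rfl fun y _ => by rw [if_pos trivial, hμg]
    rw [h1, show (∑ y : Fin T → B, (if True then ∏ t : Fin T, gfac Γ σ τ t x y else 0)) = 1 from
      ((jp_eq_sum' _ _).symm.trans (sum_causal_trivial Γ σ τ hΓs x)), mul_one]
  · rw [if_neg hx]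
    exact Finset.sum_eq_zero fun y _ => if_neg hx

theorem mass_one [Nonempty A] [Nonempty B]
    (hμg : ∀ x0 y, μ (x0, y) = (∏ t, ρ0 (x0 t)) * ∏ t, gfac Γ σ τ t x0 y)
    (hρ0s : ∑ a, ρ0 a = 1)
    (hΓs : ∀ x0 x1 x2, ∑ y, Γ y x0 x1 x2 = 1) :
    ∑ ω, μ ω = 1 := by
  classical
  have h : jp μ (fun _ => True) = ∑ ω, μ ω := by simp [jp]
  rw [← h, margX ρ0 Γ σ τ μ hμg hΓs (fun _ => True)]
  have h0 : Fin T → A := fun _ => Classical.arbitrary A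
  rw [jp_congr (show ∀ x : Fin T → A,
      True ↔ ∀ s ∈ (∅ : Finset (Fin T)), x s = h0 s from fun x =>
        ⟨fun _ s hs => absurd hs (by simp), fun _ => trivial⟩),
    prod_marg_jp ρ0 hρ0s ∅ h0]
  simp

theorem marg_single [Nonempty B]
    (hμg : ∀ x0 y, μ (x0, y) = (∏ t, ρ0 (x0 t)) * ∏ t, gfac Γ σ τ t x0 y)
    (hρ0s : ∑ a, ρ0 a = 1)
    (hΓs : ∀ x0 x1 x2, ∑ y, Γ y x0 x1 x2 = 1) (t : Fin T) (a : A) :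
    jp μ (fun ω => ω.1 t = a) = ρ0 a := by
  classical
  rw [margX ρ0 Γ σ τ μ hμg hΓs (fun x => x t = a),
    jp_congr (show ∀ x : Fin T → A,
      (x t = a) ↔ ∀ s ∈ ({t} : Finset (Fin T)), x s = (fun _ => a) s from fun x => by simp),
    prod_marg_jp ρ0 hρ0s {t} (fun _ => a)]
  simp

end Model2

section Model3
set_option linter.unusedSectionVars false
variable {A A1 A2 B : Type*} [Fintype A] [DecidableEq A] [Fintype A1] [DecidableEq A1]
  [Fintype A2] [DecidableEq A2] [Fintype B] [DecidableEq B] {T : ℕ}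
variable (ρ0 : A → ℝ) (Γ : B → A → A1 → A2 → ℝ) (σ : Fin T → (Fin T → A) → A1)
  (τ : (t : Fin T) → (Fin t.val → A) → (Fin t.val → B) → A2)
variable (μ : (Fin T → A) × (Fin T → B) → ℝ)

theorem atom [Nonempty B]
    (hμg : ∀ x0 y, μ (x0, y) = (∏ t, ρ0 (x0 t)) * ∏ t, gfac Γ σ τ t x0 y)
    (hΓs : ∀ x0 x1 x2, ∑ y, Γ y x0 x1 x2 = 1)
    (t : Fin T) (x0 : Fin T → A) (yref : Fin T → B) (b : B) :
    jp μ (fun ω => ω.1 = x0 ∧ (pxF (t : ℕ) ω.2 = pxF (t : ℕ) yref ∧ ω.2 t = b))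
      = jp μ (fun ω => ω.1 = x0 ∧ pxF (t : ℕ) ω.2 = pxF (t : ℕ) yref)
        * Γ b (x0 t) (σ t x0) (τ t (fun s => x0 (preIdx t s)) (fun s => yref (preIdx t s))) := by
  classical
  set y0' := Function.update yref t b with hy0'
  rw [jp_pair_fix ρ0 Γ σ τ μ hμg x0 (fun y => pxF (t : ℕ) y = pxF (t : ℕ) yref ∧ y t = b),
    jp_pair_fix ρ0 Γ σ τ μ hμg x0 (fun y => pxF (t : ℕ) y = pxF (t : ℕ) yref)]
  rw [jp_congr (show ∀ y : Fin T → B,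
      (pxF (t : ℕ) y = pxF (t : ℕ) yref ∧ y t = b) ↔
        (∀ s : Fin T, (s : ℕ) < (t : ℕ) + 1 → y s = y0' s) from by
    intro y
    rw [pxF_eq_iff]
    constructor
    · rintro ⟨h1, h2⟩ s hs
      rcases Nat.lt_succ_iff_lt_or_eq.mp hs with h' | h'
      · rw [hy0', Function.update_of_ne (fun he => by rw [he] at h'; exact lt_irrefl _ h') _ _]
        exact h1 s h'
      · have hst : s = t := Fin.ext h'
        subst hst
        rw [hy0', Function.update_self]
        exact h2
    · intro h
      constructor
      · intro s hs
        have h' := h s (by omega)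
        rwa [hy0', Function.update_of_ne (fun he => by rw [he] at hs; exact lt_irrefl _ hs)] at h'
      · have h' := h t (by omega)
        rwa [hy0', Function.update_self] at h')]
  rw [jp_congr (show ∀ y : Fin T → B,
      (pxF (t : ℕ) y = pxF (t : ℕ) yref) ↔ (∀ s : Fin T, (s : ℕ) < (t : ℕ) → y s = yref s)
      from fun y => pxF_eq_iff _ _ _)]
  rw [causal_sum_jp Γ σ τ hΓs x0 ((t : ℕ) + 1) y0',
    causal_sum_jp Γ σ τ hΓs x0 (t : ℕ) yref]
  have hsplit2 : ∀ s : Fin T,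
      (if (s : ℕ) < (t : ℕ) + 1 then gfac Γ σ τ s x0 y0' else 1)
        = (if (s : ℕ) < (t : ℕ) then gfac Γ σ τ s x0 yref else 1)
          * (if s = t then Γ b (x0 t) (σ t x0)
              (τ t (fun s' => x0 (preIdx t s')) (fun s' => yref (preIdx t s'))) else 1) := by
    intro s
    by_cases h1 : (s : ℕ) < (t : ℕ)
    · have hne : s ≠ t := fun he => by rw [he] at h1; exact lt_irrefl _ h1
      rw [if_pos (by omega), if_pos h1, if_neg hne, mul_one]
      refine gfac_congr Γ σ τ s x0 fun u hu => ?_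
      rw [hy0']
      exact Function.update_of_ne (fun he => by
        have := congrArg Fin.val he; omega) _ _
    · by_cases h2 : (s : ℕ) = (t : ℕ)
      · have hst : s = t := Fin.ext h2
        subst hst
        rw [if_pos (Nat.lt_succ_self _), if_neg (lt_irrefl _), if_pos rfl, one_mul]
        unfold gfac
        rw [hy0', Function.update_self]
        have harg : (fun s' : Fin (s : ℕ) => Function.update yref s b (preIdx s s'))
            = (fun s' : Fin (s : ℕ) => yref (preIdx s s')) := by
          funext s'
          refine Function.update_of_ne (fun he => ?_) _ _
          have hvv := congrArg Fin.val he
          simp only [preIdx, Fin.coe_castLE] at hvv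
          have := s'.isLt
          omega
        rw [harg]
      · rw [if_neg (by omega), if_neg h1,
          if_neg (fun he => h2 (by rw [he])), mul_one]
  rw [Finset.prod_congr rfl fun s _ => hsplit2 s, Finset.prod_mul_distrib,
    Finset.prod_ite_eq' Finset.univ t
      (fun _ => Γ b (x0 t) (σ t x0)
        (τ t (fun s' => x0 (preIdx t s')) (fun s' => yref (preIdx t s'))))]
  rw [if_pos (Finset.mem_univ t)]
  ring

theorem chanFac [Nonempty B]
    (hμg : ∀ x0 y, μ (x0, y) = (∏ t, ρ0 (x0 t)) * ∏ t, gfac Γ σ τ t x0 y)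
    (hΓs : ∀ x0 x1 x2, ∑ y, Γ y x0 x1 x2 = 1)
    (t : Fin T) {κ : Type*} [Fintype κ] [DecidableEq κ]
    (W : (Fin T → A) × (Fin T → B) → κ)
    (Wf : (Fin T → A) → (Fin T → Option B) → κ)
    (hWf : ∀ ω, W ω = Wf ω.1 (pxF (t : ℕ) ω.2))
    (e : κ → A × A1 × A2)
    (he : ∀ ω : (Fin T → A) × (Fin T → B), e (W ω) =
      (ω.1 t, σ t ω.1, τ t (fun s => ω.1 (preIdx t s)) (fun s => ω.2 (preIdx t s))))
    (c : κ) (b : B) :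
    jp μ (fun ω => W ω = c ∧ ω.2 t = b)
      = Γ b (e c).1 (e c).2.1 (e c).2.2 * jp μ (fun ω => W ω = c) := by
  classical
  rw [jp_fiber (fun ω => W ω = c ∧ ω.2 t = b)
      (fun ω : (Fin T → A) × (Fin T → B) => (ω.1, pxF (t : ℕ) ω.2)),
    jp_fiber (fun ω => W ω = c)
      (fun ω : (Fin T → A) × (Fin T → B) => (ω.1, pxF (t : ℕ) ω.2)),
    Finset.mul_sum]
  refine Finset.sum_congr rfl fun v _ => ?_
  obtain ⟨x0, w⟩ := v
  have hiff1 : ∀ ω : (Fin T → A) × (Fin T → B),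
      ((ω.1, pxF (t : ℕ) ω.2) = (x0, w) ∧ (W ω = c ∧ ω.2 t = b)) ↔
        (Wf x0 w = c ∧ (ω.1 = x0 ∧ (pxF (t : ℕ) ω.2 = w ∧ ω.2 t = b))) := by
    intro ω
    rw [Prod.mk.injEq]
    constructor
    · rintro ⟨⟨h1, h2⟩, hw, hb⟩
      exact ⟨by rw [← hw, hWf ω, h1, h2], h1, h2, hb⟩
    · rintro ⟨hc, h1, h2, hb⟩
      exact ⟨⟨h1, h2⟩, by rw [hWf ω, h1, h2, hc], hb⟩
  have hiff2 : ∀ ω : (Fin T → A) × (Fin T → B),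
      ((ω.1, pxF (t : ℕ) ω.2) = (x0, w) ∧ W ω = c) ↔
        (Wf x0 w = c ∧ (ω.1 = x0 ∧ pxF (t : ℕ) ω.2 = w)) := by
    intro ω
    rw [Prod.mk.injEq]
    constructor
    · rintro ⟨⟨h1, h2⟩, hw⟩
      exact ⟨by rw [← hw, hWf ω, h1, h2], h1, h2⟩
    · rintro ⟨hc, h1, h2⟩
      exact ⟨⟨h1, h2⟩, by rw [hWf ω, h1, h2, hc]⟩
  rw [jp_congr hiff1, jp_congr hiff2]
  by_cases hc : Wf x0 w = c
  · rw [jp_congr (show ∀ ω : (Fin T → A) × (Fin T → B),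
        (Wf x0 w = c ∧ (ω.1 = x0 ∧ (pxF (t : ℕ) ω.2 = w ∧ ω.2 t = b))) ↔
          (ω.1 = x0 ∧ (pxF (t : ℕ) ω.2 = w ∧ ω.2 t = b)) from
        fun ω => ⟨fun h => h.2, fun h => ⟨hc, h⟩⟩),
      jp_congr (show ∀ ω : (Fin T → A) × (Fin T → B),
        (Wf x0 w = c ∧ (ω.1 = x0 ∧ pxF (t : ℕ) ω.2 = w)) ↔
          (ω.1 = x0 ∧ pxF (t : ℕ) ω.2 = w) from
        fun ω => ⟨fun h => h.2, fun h => ⟨hc, h⟩⟩)]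
    obtain ⟨yref, hyref⟩ : ∃ yr : Fin T → B, yr = fun s => (w s).getD (Classical.arbitrary B) :=
      ⟨_, rfl⟩
    by_cases hw : pxF (t : ℕ) yref = w
    · rw [← hw] at hc ⊢
      rw [atom ρ0 Γ σ τ μ hμg hΓs t x0 yref b]
      have hec : e c = (x0 t, σ t x0,
          τ t (fun s => x0 (preIdx t s)) (fun s => yref (preIdx t s))) := by
        rw [← hc, ← hWf (x0, yref)]
        exact he (x0, yref)
      rw [hec]
      ring
    · have hnone : ∀ ω : (Fin T → A) × (Fin T → B), ¬ (pxF (t : ℕ) ω.2 = w) := by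
        intro ω hωw
        apply hw
        rw [← hωw, pxF_eq_iff]
        intro s hs
        rw [hyref]
        dsimp only
        have hws : w s = some (ω.2 s) := by rw [← hωw]; simp [pxF, hs]
        rw [hws]
        rfl
      rw [jp_zero μ (fun ω hh => hnone ω hh.2.1), jp_zero μ (fun ω hh => hnone ω hh.2),
        mul_zero]
  · rw [jp_zero μ (fun ω (hh : _ ∧ _) => hc hh.1), jp_zero μ (fun ω (hh : _ ∧ _) => hc hh.1),
      mul_zero]

theorem prefix_marg [Nonempty B]
    (hμg : ∀ x0 y, μ (x0, y) = (∏ t, ρ0 (x0 t)) * ∏ t, gfac Γ σ τ t x0 y)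
    (hρ0s : ∑ a, ρ0 a = 1)
    (hΓs : ∀ x0 x1 x2, ∑ y, Γ y x0 x1 x2 = 1) (k : ℕ) (xref : Fin T → A) :
    jp μ (fun ω => pxF k ω.1 = pxF k xref)
      = ∏ s ∈ Finset.univ.filter (fun s : Fin T => (s : ℕ) < k), ρ0 (xref s) := by
  classical
  rw [margX ρ0 Γ σ τ μ hμg hΓs (fun x => pxF k x = pxF k xref),
    jp_congr (show ∀ x : Fin T → A, (pxF k x = pxF k xref) ↔
      (∀ s ∈ Finset.univ.filter (fun s : Fin T => (s : ℕ) < k), x s = xref s) from by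
      intro x
      rw [pxF_eq_iff]
      constructor
      · intro h s hs
        exact h s (Finset.mem_filter.mp hs).2
      · intro h s hs
        exact h s (Finset.mem_filter.mpr ⟨Finset.mem_univ s, hs⟩)),
    prod_marg_jp ρ0 hρ0s _ xref]

theorem indep_past [Nonempty B]
    (hμg : ∀ x0 y, μ (x0, y) = (∏ t, ρ0 (x0 t)) * ∏ t, gfac Γ σ τ t x0 y)
    (hρ0s : ∑ a, ρ0 a = 1)
    (hΓs : ∀ x0 x1 x2, ∑ y, Γ y x0 x1 x2 = 1) (t : Fin T) (xref : Fin T → A) :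
    jp μ (fun ω => ω.1 t = xref t ∧ pxF (t : ℕ) ω.1 = pxF (t : ℕ) xref)
      = jp μ (fun ω => ω.1 t = xref t) * jp μ (fun ω => pxF (t : ℕ) ω.1 = pxF (t : ℕ) xref) := by
  classical
  have hnotmem : t ∉ Finset.univ.filter (fun s : Fin T => (s : ℕ) < (t : ℕ)) := by
    simp
  rw [margX ρ0 Γ σ τ μ hμg hΓs (fun x => x t = xref t ∧ pxF (t : ℕ) x = pxF (t : ℕ) xref),
    jp_congr (show ∀ x : Fin T → A,
      (x t = xref t ∧ pxF (t : ℕ) x = pxF (t : ℕ) xref) ↔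
        (∀ s ∈ insert t (Finset.univ.filter (fun s : Fin T => (s : ℕ) < (t : ℕ))),
          x s = xref s) from by
      intro x
      rw [pxF_eq_iff]
      constructor
      · rintro ⟨h1, h2⟩ s hs
        rcases Finset.mem_insert.mp hs with h' | h'
        · rw [h']; exact h1
        · exact h2 s (Finset.mem_filter.mp h').2
      · intro h
        refine ⟨h t (Finset.mem_insert_self _ _), fun s hs => ?_⟩
        exact h s (Finset.mem_insert_of_mem (Finset.mem_filter.mpr ⟨Finset.mem_univ s, hs⟩))),
    prod_marg_jp ρ0 hρ0s _ xref,
    Finset.prod_insert hnotmem,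
    marg_single ρ0 Γ σ τ μ hμg hρ0s hΓs t (xref t),
    prefix_marg ρ0 Γ σ τ μ hμg hρ0s hΓs (t : ℕ) xref]

end Model3

section Glue
variable {Ω α β γ δ : Type*} [Fintype Ω]
variable [Fintype α] [DecidableEq α] [Fintype β] [DecidableEq β]
variable [Fintype γ] [DecidableEq γ] [Fintype δ] [DecidableEq δ]

/-- swap of a pair is a fiberwise equivalence; useful with `condMI_congr`. -/
theorem pair_swap_iff (X : Ω → α) (Y : Ω → β) :
    ∀ ω' ω, ((fun ω => (X ω, Y ω)) ω' = (fun ω => (X ω, Y ω)) ω)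
      ↔ ((fun ω => (Y ω, X ω)) ω' = (fun ω => (Y ω, X ω)) ω) := by
  intro ω' ω
  simp only [Prod.mk.injEq]
  tauto

theorem condMI_le_pair_second (μ : Ω → ℝ) (h0 : ∀ ω, 0 ≤ μ ω)
    (X : Ω → α) (Y : Ω → β) (W : Ω → δ) (Z : Ω → γ) :
    condMI μ X Y Z ≤ condMI μ X (fun ω => (W ω, Y ω)) Z := by
  rw [condMI_symm μ X Y Z, condMI_symm μ X _ Z]
  calc condMI μ Y X Z ≤ condMI μ (fun ω => (Y ω, W ω)) X Z :=
        condMI_le_pair_left μ h0 Y W X Z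
    _ = condMI μ (fun ω => (W ω, Y ω)) X Z :=
        condMI_congr μ (pair_swap_iff Y W) (fun _ _ => Iff.rfl) (fun _ _ => Iff.rfl)

/-- chain rule on the second argument:
`I(X; (W,Y) | Z) = I(X;W|Z) + I(X;Y|(W,Z))`. -/
theorem condMI_chain_second (μ : Ω → ℝ) (X : Ω → α) (Y : Ω → β) (W : Ω → δ) (Z : Ω → γ) :
    condMI μ X (fun ω => (W ω, Y ω)) Z
      = condMI μ X W Z + condMI μ X Y (fun ω => (W ω, Z ω)) := by
  rw [condMI_symm μ X _ Z, condMI_chain μ W Y X Z, condMI_symm μ W X Z,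
    condMI_symm μ Y X _]

/-- `I(X ; (Y,W)) = I(X;Y) + I(X;W|Y)`. -/
theorem MI_pair_split (μ : Ω → ℝ) (h1 : ∑ ω, μ ω = 1)
    (X : Ω → α) (Y : Ω → β) (W : Ω → δ) :
    MI μ X (fun ω => (Y ω, W ω)) = MI μ X Y + condMI μ X W Y := by
  rw [MI_eq_condMI μ h1, MI_eq_condMI μ h1, condMI_chain_second μ X W Y (fun _ => ())]
  congr 1
  exact condMI_congr μ (fun _ _ => Iff.rfl) (fun _ _ => Iff.rfl)
    (fun ω' ω => by simp only [Prod.mk.injEq, and_true])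

end Glue

section ChanZero
set_option linter.unusedSectionVars false
variable {A A1 A2 B : Type*} [Fintype A] [DecidableEq A] [Fintype A1] [DecidableEq A1]
  [Fintype A2] [DecidableEq A2] [Fintype B] [DecidableEq B] {T : ℕ}
variable (ρ0 : A → ℝ) (Γ : B → A → A1 → A2 → ℝ) (σ : Fin T → (Fin T → A) → A1)
  (τ : (t : Fin T) → (Fin t.val → A) → (Fin t.val → B) → A2)
variable (μ : (Fin T → A) × (Fin T → B) → ℝ)

/-- conditional independence of `Y_t` from any past/state variable `U` given a
conditioning variable `W` that determines the channel inputs. -/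
theorem chan_zero [Nonempty B]
    (hμg : ∀ x0 y, μ (x0, y) = (∏ t, ρ0 (x0 t)) * ∏ t, gfac Γ σ τ t x0 y)
    (hρ0 : ∀ a, 0 ≤ ρ0 a) (hΓ0 : ∀ y x0 x1 x2, 0 ≤ Γ y x0 x1 x2)
    (hΓs : ∀ x0 x1 x2, ∑ y, Γ y x0 x1 x2 = 1)
    (t : Fin T) {κ₁ κ₂ : Type*} [Fintype κ₁] [DecidableEq κ₁] [Fintype κ₂] [DecidableEq κ₂]
    (U : (Fin T → A) × (Fin T → B) → κ₁) (W : (Fin T → A) × (Fin T → B) → κ₂)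
    (Uf : (Fin T → A) → (Fin T → Option B) → κ₁)
    (Wf : (Fin T → A) → (Fin T → Option B) → κ₂)
    (hUf : ∀ ω, U ω = Uf ω.1 (pxF (t : ℕ) ω.2))
    (hWf : ∀ ω, W ω = Wf ω.1 (pxF (t : ℕ) ω.2))
    (e : κ₂ → A × A1 × A2)
    (he : ∀ ω : (Fin T → A) × (Fin T → B), e (W ω) =
      (ω.1 t, σ t ω.1, τ t (fun s => ω.1 (preIdx t s)) (fun s => ω.2 (preIdx t s)))) :
    condMI μ U (fun ω => ω.2 t) W = 0 := by
  classical
  refine condMI_zero_of_fac μ (mu_nonneg ρ0 Γ σ τ μ hμg hρ0 hΓ0) _ _ _ fun ω hω => ?_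
  have h3 := chanFac ρ0 Γ σ τ μ hμg hΓs t (fun ω' => (U ω', W ω'))
    (fun x w => (Uf x w, Wf x w))
    (fun ω' => congrArg₂ Prod.mk (hUf ω') (hWf ω'))
    (fun v => e v.2) (fun ω' => he ω') (U ω, W ω) (ω.2 t)
  have h2 := chanFac ρ0 Γ σ τ μ hμg hΓs t W Wf hWf e he (W ω) (ω.2 t)
  have e3 : jp μ (fun ω' => U ω' = U ω ∧ ω'.2 t = ω.2 t ∧ W ω' = W ω)
      = jp μ (fun ω' => (U ω', W ω') = (U ω, W ω) ∧ ω'.2 t = ω.2 t) := by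
    refine jp_congr fun ω' => ?_
    simp only [Prod.mk.injEq]
    tauto
  have e2 : jp μ (fun ω' => ω'.2 t = ω.2 t ∧ W ω' = W ω)
      = jp μ (fun ω' => W ω' = W ω ∧ ω'.2 t = ω.2 t) := by
    refine jp_congr fun ω' => ?_
    tauto
  have e1 : jp μ (fun ω' => (U ω', W ω') = (U ω, W ω))
      = jp μ (fun ω' => U ω' = U ω ∧ W ω' = W ω) := by
    refine jp_congr fun ω' => ?_
    simp only [Prod.mk.injEq]
  rw [e3, h3, e2, h2, ← e1]
  ring

end ChanZero

set_option maxHeartbeats 2000000 in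
set_option linter.unusedVariables false in
/-- Core step of the converse of Theorem 1: with `Z` uniform on `{1,…,T}`
independent of everything, `X₀^T` i.i.d., `X₁ₜ = σₜ(X₀^T)`,
`X₂ₜ = τₜ(X₀^{t−1}, Y^{t−1})` and `Y` produced by the memoryless channel `Γ`,
one has `I(X₀ᴢ; X₂ᴢ) ≤ I(X₁ᴢ; Yᴢ | X₀ᴢ, X₂ᴢ)`. -/
theorem converse_information_constraint
    {A A1 A2 B : Type*} [Fintype A] [DecidableEq A] [Fintype A1] [DecidableEq A1]
    [Fintype A2] [DecidableEq A2] [Fintype B] [DecidableEq B]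
    {T : ℕ} (hT : 0 < T)
    (ρ0 : A → ℝ) (hρ0 : ∀ x, 0 ≤ ρ0 x) (hρ0s : ∑ x, ρ0 x = 1)
    (Γ : B → A → A1 → A2 → ℝ)
    (hΓ0 : ∀ y x0 x1 x2, 0 ≤ Γ y x0 x1 x2)
    (hΓs : ∀ x0 x1 x2, ∑ y, Γ y x0 x1 x2 = 1)
    -- strategies of Agent 1 and Agent 2
    (σ : Fin T → (Fin T → A) → A1)
    (τ : (t : Fin T) → (Fin t.val → A) → (Fin t.val → B) → A2)
    -- joint law of (X₀^T, Y^T): i.i.d. states and memoryless observation channel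
    (μ : (Fin T → A) × (Fin T → B) → ℝ)
    (hμ : ∀ x0 y, μ (x0, y) =
      (∏ t, ρ0 (x0 t)) *
        ∏ t, Γ (y t) (x0 t) (σ t x0)
          (τ t (fun s => x0 (preIdx t s)) (fun s => y (preIdx t s))))
    -- the randomized-stage space: `Z` uniform on `Fin T`, independent of the rest
    (μ' : ((Fin T → A) × (Fin T → B)) × Fin T → ℝ)
    (hμ' : ∀ ω t, μ' (ω, t) = μ ω / T) :
    MI μ' (fun p => p.1.1 p.2)
        (fun p => τ p.2 (fun s => p.1.1 (preIdx p.2 s)) (fun s => p.1.2 (preIdx p.2 s)))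
      ≤ condMI μ' (fun p => σ p.2 p.1.1) (fun p => p.1.2 p.2)
          (fun p => (p.1.1 p.2,
            τ p.2 (fun s => p.1.1 (preIdx p.2 s)) (fun s => p.1.2 (preIdx p.2 s)))) := by
  classical
  have hAne : Nonempty A := by
    by_contra h
    rw [not_nonempty_iff] at h
    rw [Finset.univ_eq_empty, Finset.sum_empty] at hρ0s
    exact one_ne_zero hρ0s.symm
  haveI := hAne
  have hBne : Nonempty B := by
    by_contra h
    rw [not_nonempty_iff] at h
    have h2 := hΓs (Classical.arbitrary A) (σ ⟨0, hT⟩ (fun _ => Classical.arbitrary A))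
      (τ ⟨0, hT⟩ (fun s => (Nat.not_lt_zero _ s.isLt).elim)
        (fun s => (Nat.not_lt_zero _ s.isLt).elim))
    rw [Finset.univ_eq_empty, Finset.sum_empty] at h2
    exact one_ne_zero h2.symm
  haveI := hBne
  have hμg : ∀ x0 y, μ (x0, y) = (∏ t, ρ0 (x0 t)) * ∏ t, gfac Γ σ τ t x0 y := hμ
  have h0 : ∀ ω, 0 ≤ μ ω := mu_nonneg ρ0 Γ σ τ μ hμg hρ0 hΓ0
  have h1 : ∑ ω, μ ω = 1 := mass_one ρ0 Γ σ τ μ hμg hρ0s hΓs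
  have hTne : (T : ℝ) ≠ 0 := Nat.cast_ne_zero.mpr hT.ne'
  have h0' : ∀ p, 0 ≤ μ' p := by
    rintro ⟨ω, t⟩
    rw [hμ']
    exact div_nonneg (h0 ω) (Nat.cast_nonneg T)
  have h1' : ∑ p, μ' p = 1 := by
    rw [Fintype.sum_prod_type]
    have hrow : ∀ ω, ∑ t : Fin T, μ' (ω, t) = μ ω := by
      intro ω
      rw [Finset.sum_congr rfl fun t _ => hμ' ω t, Finset.sum_const, Finset.card_univ,
        Fintype.card_fin, nsmul_eq_mul]
      field_simp
    rw [Finset.sum_congr rfl fun ω _ => hrow ω, h1]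
  -- Step A
  have hZX0 : MI μ' (fun p : ((Fin T → A) × (Fin T → B)) × Fin T => p.2)
      (fun p : ((Fin T → A) × (Fin T → B)) × Fin T => p.1.1 p.2) = 0 := by
    refine MI_zero_of_fac μ' h0' _ _ fun p hp => ?_
    obtain ⟨ω, t⟩ := p
    have e12 : jp μ' (fun q : ((Fin T → A) × (Fin T → B)) × Fin T =>
        q.2 = t ∧ q.1.1 q.2 = ω.1 t) = ρ0 (ω.1 t) / T := by
      rw [jp_congr (show ∀ q : ((Fin T → A) × (Fin T → B)) × Fin T,
          (q.2 = t ∧ q.1.1 q.2 = ω.1 t) ↔ ((fun ω' => ω'.1 t = ω.1 t) q.1 ∧ q.2 = t) from by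
        rintro ⟨ω', t'⟩
        dsimp only
        constructor
        · rintro ⟨h1x, h2x⟩
          subst h1x
          exact ⟨h2x, rfl⟩
        · rintro ⟨h1x, h2x⟩
          subst h2x
          exact ⟨rfl, h1x⟩),
        jp_slice μ μ' hμ' (fun ω' => ω'.1 t = ω.1 t) t,
        marg_single ρ0 Γ σ τ μ hμg hρ0s hΓs t (ω.1 t)]
    have e1 : jp μ' (fun q : ((Fin T → A) × (Fin T → B)) × Fin T => q.2 = t) = 1 / T := by
      rw [jp_congr (show ∀ q : ((Fin T → A) × (Fin T → B)) × Fin T,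
          (q.2 = t) ↔ ((fun _ => True) q.1 ∧ q.2 = t) from fun q => by tauto),
        jp_slice μ μ' hμ' (fun _ => True) t]
      congr 1
      simpa [jp] using h1
    have e2 : jp μ' (fun q : ((Fin T → A) × (Fin T → B)) × Fin T => q.1.1 q.2 = ω.1 t)
        = ρ0 (ω.1 t) := by
      rw [jp_unslice μ μ' hμ' (fun q => q.1.1 q.2 = ω.1 t),
        Finset.sum_congr rfl fun s _ => marg_single ρ0 Γ σ τ μ hμg hρ0s hΓs s (ω.1 t),
        Finset.sum_const, Finset.card_univ, Fintype.card_fin, nsmul_eq_mul]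
      field_simp
    show jp μ' (fun q => q.2 = t ∧ q.1.1 q.2 = ω.1 t)
        = jp μ' (fun q => q.2 = t) * jp μ' (fun q => q.1.1 q.2 = ω.1 t)
    rw [e12, e1, e2]
    ring
  have stepA : MI μ' (fun p => p.1.1 p.2)
      (fun p => τ p.2 (fun s => p.1.1 (preIdx p.2 s)) (fun s => p.1.2 (preIdx p.2 s)))
      ≤ condMI μ' (fun p => p.1.1 p.2)
        (fun p => τ p.2 (fun s => p.1.1 (preIdx p.2 s)) (fun s => p.1.2 (preIdx p.2 s)))
        (fun p => p.2) := by
    have c1 : MI μ' (fun p => p.1.1 p.2)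
        (fun p => τ p.2 (fun s => p.1.1 (preIdx p.2 s)) (fun s => p.1.2 (preIdx p.2 s)))
        = condMI μ' (fun p => p.1.1 p.2)
          (fun p => τ p.2 (fun s => p.1.1 (preIdx p.2 s)) (fun s => p.1.2 (preIdx p.2 s)))
          (fun _ => ()) := MI_eq_condMI μ' h1' _ _
    have c2 : condMI μ' (fun p => p.1.1 p.2)
        (fun p => τ p.2 (fun s => p.1.1 (preIdx p.2 s)) (fun s => p.1.2 (preIdx p.2 s)))
        (fun _ => ())
        ≤ condMI μ' (fun p => p.1.1 p.2)
          (fun p => (p.2, τ p.2 (fun s => p.1.1 (preIdx p.2 s)) (fun s => p.1.2 (preIdx p.2 s))))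
          (fun _ => ()) :=
      condMI_le_pair_second μ' h0' _ _ _ _
    have c3 : condMI μ' (fun p => p.1.1 p.2)
        (fun p => (p.2, τ p.2 (fun s => p.1.1 (preIdx p.2 s)) (fun s => p.1.2 (preIdx p.2 s))))
        (fun _ => ())
        = condMI μ' (fun p => p.2) (fun p => p.1.1 p.2) (fun _ => ())
          + condMI μ' (fun p => τ p.2 (fun s => p.1.1 (preIdx p.2 s))
              (fun s => p.1.2 (preIdx p.2 s)))
            (fun p => p.1.1 p.2)
            (fun p : ((Fin T → A) × (Fin T → B)) × Fin T => (p.2, ())) := by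
      rw [condMI_symm μ']
      exact condMI_chain μ' _ _ _ _
    have c4 : condMI μ' (fun p => p.2) (fun p => p.1.1 p.2) (fun _ => ()) = 0 := by
      rw [← MI_eq_condMI μ' h1']
      exact hZX0
    have c5 : condMI μ' (fun p => τ p.2 (fun s => p.1.1 (preIdx p.2 s))
          (fun s => p.1.2 (preIdx p.2 s)))
        (fun p => p.1.1 p.2)
        (fun p : ((Fin T → A) × (Fin T → B)) × Fin T => (p.2, ()))
        = condMI μ' (fun p => p.1.1 p.2)
          (fun p => τ p.2 (fun s => p.1.1 (preIdx p.2 s)) (fun s => p.1.2 (preIdx p.2 s)))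
          (fun p => p.2) := by
      rw [condMI_symm μ']
      exact condMI_congr μ' (fun _ _ => Iff.rfl) (fun _ _ => Iff.rfl)
        (fun p' p => by simp only [Prod.mk.injEq, and_true])
    linarith
  -- Step B
  have stepB : condMI μ' (fun p => p.1.1 p.2)
      (fun p => τ p.2 (fun s => p.1.1 (preIdx p.2 s)) (fun s => p.1.2 (preIdx p.2 s)))
      (fun p => p.2)
      ≤ condMI μ' (fun p => p.1.1 p.2)
        (fun p => (pxF (p.2 : ℕ) p.1.1, pxF (p.2 : ℕ) p.1.2))
        (fun p => p.2) := by
    refine condMI_le_of_det μ' h0' _ _ _ _ ?_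
    rintro ⟨⟨x', y'⟩, t'⟩ ⟨⟨x, y⟩, t⟩ hW hZ
    dsimp only at hW hZ ⊢
    subst hZ
    rw [Prod.mk.injEq] at hW
    obtain ⟨hx, hy⟩ := hW
    exact congrArg₂ (τ t')
      (funext fun s => (pxF_eq_iff _ _ _).mp hx (preIdx t' s) s.isLt)
      (funext fun s => (pxF_eq_iff _ _ _).mp hy (preIdx t' s) s.isLt)
  -- Step C
  have stepC : condMI μ' (fun p => p.1.1 p.2)
      (fun p => (pxF (p.2 : ℕ) p.1.1, pxF (p.2 : ℕ) p.1.2))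
      (fun p => p.2)
      = (∑ t : Fin T, MI μ (fun ω => ω.1 t)
          (fun ω => (pxF (t : ℕ) ω.1, pxF (t : ℕ) ω.2))) / T :=
    condMI_tensorZ μ μ' hμ' h0 hT h1
      (fun t ω => ω.1 t) (fun t ω => (pxF (t : ℕ) ω.1, pxF (t : ℕ) ω.2))
  -- Step D
  have stepD : ∀ t : Fin T, MI μ (fun ω => ω.1 t)
      (fun ω => (pxF (t : ℕ) ω.1, pxF (t : ℕ) ω.2))
      = condMI μ (fun ω => ω.1 t) (fun ω => pxF (t : ℕ) ω.2)
          (fun ω => pxF (t : ℕ) ω.1) := by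
    intro t
    rw [MI_pair_split μ h1 (fun ω => ω.1 t) (fun ω => pxF (t : ℕ) ω.1)
        (fun ω => pxF (t : ℕ) ω.2),
      MI_zero_of_fac μ h0 (fun ω => ω.1 t) (fun ω => pxF (t : ℕ) ω.1)
        (fun ω _ => indep_past ρ0 Γ σ τ μ hμg hρ0s hΓs t ω.1),
      zero_add]
    -- Step E : telescoping (Csiszár-type identity)
  set aK : ℕ → ℝ := fun k => condMI μ (fun ω => sxF k ω.1) (fun ω => pxF k ω.2)
    (fun ω => pxF k ω.1) with haKd
  set bK : Fin T → ℝ := fun t => condMI μ (fun ω => ω.1 t) (fun ω => pxF (t : ℕ) ω.2)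
    (fun ω => pxF (t : ℕ) ω.1) with hbKd
  set cK : Fin T → ℝ := fun t => condMI μ (fun ω => sxF ((t : ℕ) + 1) ω.1)
    (fun ω => ω.2 t) (fun ω => (pxF (t : ℕ) ω.2, pxF ((t : ℕ) + 1) ω.1)) with hcKd
  set dK : Fin T → ℝ := fun t => condMI μ (fun ω => σ t ω.1) (fun ω => ω.2 t)
    (fun ω => (ω.1 t, τ t (fun s => ω.1 (preIdx t s)) (fun s => ω.2 (preIdx t s)))) with hdKd
  have hrec : ∀ (k : ℕ) (hk : k < T), aK (k + 1) + bK ⟨k, hk⟩ = aK k + cK ⟨k, hk⟩ := by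
    intro k hk
    have e1 : aK k = bK ⟨k, hk⟩
        + condMI μ (fun ω => sxF (k + 1) ω.1) (fun ω => pxF k ω.2)
            (fun ω => pxF (k + 1) ω.1) := by
      have ha : aK k = condMI μ (fun ω => (ω.1 ⟨k, hk⟩, sxF (k + 1) ω.1))
          (fun ω => pxF k ω.2) (fun ω => pxF k ω.1) := by
        rw [haKd]
        refine condMI_congr μ ?_ (fun _ _ => Iff.rfl) (fun _ _ => Iff.rfl)
        intro ω' ω
        constructor
        · intro h
          obtain ⟨ha', hb'⟩ := (sxF_succ_iff ⟨k, hk⟩ ω'.1 ω.1).mp h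
          rw [Prod.mk.injEq]
          exact ⟨ha', hb'⟩
        · intro h
          rw [Prod.mk.injEq] at h
          exact (sxF_succ_iff ⟨k, hk⟩ ω'.1 ω.1).mpr h
      have hb : condMI μ (fun ω => (ω.1 ⟨k, hk⟩, sxF (k + 1) ω.1))
          (fun ω => pxF k ω.2) (fun ω => pxF k ω.1)
          = condMI μ (fun ω => ω.1 ⟨k, hk⟩) (fun ω => pxF k ω.2) (fun ω => pxF k ω.1)
            + condMI μ (fun ω => sxF (k + 1) ω.1) (fun ω => pxF k ω.2)
                (fun ω => (ω.1 ⟨k, hk⟩, pxF k ω.1)) := condMI_chain μ _ _ _ _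
      have hc : condMI μ (fun ω => sxF (k + 1) ω.1) (fun ω => pxF k ω.2)
          (fun ω => (ω.1 ⟨k, hk⟩, pxF k ω.1))
          = condMI μ (fun ω => sxF (k + 1) ω.1) (fun ω => pxF k ω.2)
              (fun ω => pxF (k + 1) ω.1) := by
        refine condMI_congr μ (fun _ _ => Iff.rfl) (fun _ _ => Iff.rfl) ?_
        intro ω' ω
        constructor
        · intro h
          rw [Prod.mk.injEq] at h
          exact (pxF_succ_iff ⟨k, hk⟩ ω'.1 ω.1).mpr ⟨h.1, h.2⟩
        · intro h
          obtain ⟨ha', hb'⟩ := (pxF_succ_iff ⟨k, hk⟩ ω'.1 ω.1).mp h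
          rw [Prod.mk.injEq]
          exact ⟨ha', hb'⟩
      rw [ha, hb, hc, hbKd]
    have e2 : aK (k + 1) = condMI μ (fun ω => sxF (k + 1) ω.1) (fun ω => pxF k ω.2)
        (fun ω => pxF (k + 1) ω.1) + cK ⟨k, hk⟩ := by
      have ha : aK (k + 1) = condMI μ (fun ω => sxF (k + 1) ω.1)
          (fun ω => (pxF k ω.2, ω.2 ⟨k, hk⟩)) (fun ω => pxF (k + 1) ω.1) := by
        rw [haKd]
        refine condMI_congr μ (fun _ _ => Iff.rfl) ?_ (fun _ _ => Iff.rfl)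
        intro ω' ω
        constructor
        · intro h
          obtain ⟨ha', hb'⟩ := (pxF_succ_iff ⟨k, hk⟩ ω'.2 ω.2).mp h
          rw [Prod.mk.injEq]
          exact ⟨hb', ha'⟩
        · intro h
          rw [Prod.mk.injEq] at h
          exact (pxF_succ_iff ⟨k, hk⟩ ω'.2 ω.2).mpr ⟨h.2, h.1⟩
      have hb : condMI μ (fun ω => sxF (k + 1) ω.1)
          (fun ω => (pxF k ω.2, ω.2 ⟨k, hk⟩)) (fun ω => pxF (k + 1) ω.1)
          = condMI μ (fun ω => sxF (k + 1) ω.1) (fun ω => pxF k ω.2)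
              (fun ω => pxF (k + 1) ω.1)
            + condMI μ (fun ω => sxF (k + 1) ω.1) (fun ω => ω.2 ⟨k, hk⟩)
                (fun ω => (pxF k ω.2, pxF (k + 1) ω.1)) :=
        condMI_chain_second μ _ _ _ _
      rw [ha, hb, hcKd]
    rw [e1, e2]
    ring
  have ha0 : aK 0 = 0 := by
    rw [haKd]
    dsimp only
    rw [condMI_symm μ]
    exact condMI_zero_left_const μ h0 _ _ _ (fun ω' ω => pxF_zero ω'.2 ω.2)
  have haT : aK T = 0 := by
    rw [haKd]
    dsimp only
    exact condMI_zero_left_const μ h0 _ _ _ (fun ω' ω => sxF_top ω'.1 ω.1)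
  have hEsum : ∑ t : Fin T, bK t = ∑ t : Fin T, cK t := by
    set bN : ℕ → ℝ := fun k => if hk : k < T then bK ⟨k, hk⟩ else 0 with hbN
    set cN : ℕ → ℝ := fun k => if hk : k < T then cK ⟨k, hk⟩ else 0 with hcN
    have h1b : ∑ t : Fin T, bK t = ∑ k ∈ Finset.range T, bN k := by
      rw [← Fin.sum_univ_eq_sum_range (fun k => bN k) T]
      refine Finset.sum_congr rfl fun i _ => ?_
      rw [hbN]
      dsimp only
      rw [dif_pos i.isLt, Fin.eta]
    have h1c : ∑ t : Fin T, cK t = ∑ k ∈ Finset.range T, cN k := by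
      rw [← Fin.sum_univ_eq_sum_range (fun k => cN k) T]
      refine Finset.sum_congr rfl fun i _ => ?_
      rw [hcN]
      dsimp only
      rw [dif_pos i.isLt, Fin.eta]
    have h2 : ∀ k ∈ Finset.range T, bN k = cN k + (aK k - aK (k + 1)) := by
      intro k hk
      rw [Finset.mem_range] at hk
      rw [hbN, hcN]
      dsimp only
      rw [dif_pos hk, dif_pos hk]
      have := hrec k hk
      linarith
    rw [h1b, h1c, Finset.sum_congr rfl h2, Finset.sum_add_distrib,
      Finset.sum_range_sub' (fun k => aK k) T, ha0, haT]
    ring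
    -- functional representation of the conditioning variable through the past
  have hWfgen : ∀ (t : Fin T) (ω : (Fin T → A) × (Fin T → B)),
      (σ t ω.1, (ω.1 t, τ t (fun s => ω.1 (preIdx t s)) (fun s => ω.2 (preIdx t s))))
      = (fun x (w : Fin T → Option B) => (σ t x, (x t, τ t (fun s => x (preIdx t s))
          (fun s => (w (preIdx t s)).getD (Classical.arbitrary B))))) ω.1 (pxF (t : ℕ) ω.2) := by
    intro t ω
    dsimp only
    refine congrArg (Prod.mk _) (congrArg (Prod.mk _) (congrArg (τ t _) ?_))
    funext s
    have hs : ((preIdx t s : Fin T) : ℕ) < (t : ℕ) := s.isLt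
    simp [pxF, hs]
  -- Step F : per-stage channel bound
  have stepF : ∀ t : Fin T, cK t ≤ dK t := by
    intro t
    have z1 : condMI μ (fun ω => sxF ((t : ℕ) + 1) ω.1) (fun ω => ω.2 t)
        (fun ω => (σ t ω.1, (pxF (t : ℕ) ω.2, pxF ((t : ℕ) + 1) ω.1))) = 0 := by
      refine chan_zero ρ0 Γ σ τ μ hμg hρ0 hΓ0 hΓs t _ _
        (fun x (w : Fin T → Option B) => sxF ((t : ℕ) + 1) x)
        (fun x (w : Fin T → Option B) => (σ t x, (w, pxF ((t : ℕ) + 1) x)))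
        (fun ω => rfl) (fun ω => rfl)
        (fun v => ((v.2.2 t).getD (Classical.arbitrary A), v.1,
          τ t (fun s => (v.2.2 (preIdx t s)).getD (Classical.arbitrary A))
              (fun s => (v.2.1 (preIdx t s)).getD (Classical.arbitrary B))))
        ?_
      intro ω
      dsimp only
      have c1 : (pxF ((t : ℕ) + 1) ω.1 t).getD (Classical.arbitrary A) = ω.1 t := by
        simp [pxF]
      have c3 : (fun s => (pxF ((t : ℕ) + 1) ω.1 (preIdx t s)).getD (Classical.arbitrary A))
          = fun s => ω.1 (preIdx t s) := by
        funext s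
        have hs : ((preIdx t s : Fin T) : ℕ) < (t : ℕ) + 1 := Nat.lt_succ_of_lt s.isLt
        simp [pxF, hs]
      have c4 : (fun s => (pxF (t : ℕ) ω.2 (preIdx t s)).getD (Classical.arbitrary B))
          = fun s => ω.2 (preIdx t s) := by
        funext s
        have hs : ((preIdx t s : Fin T) : ℕ) < (t : ℕ) := s.isLt
        simp [pxF, hs]
      rw [c1, c3, c4]
    have z2 : condMI μ (fun ω => (pxF (t : ℕ) ω.2, pxF ((t : ℕ) + 1) ω.1)) (fun ω => ω.2 t)
        (fun ω => (σ t ω.1, (ω.1 t,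
          τ t (fun s => ω.1 (preIdx t s)) (fun s => ω.2 (preIdx t s))))) = 0 := by
      refine chan_zero ρ0 Γ σ τ μ hμg hρ0 hΓ0 hΓs t _ _
        (fun x (w : Fin T → Option B) => (w, pxF ((t : ℕ) + 1) x))
        (fun x (w : Fin T → Option B) => (σ t x, (x t, τ t (fun s => x (preIdx t s))
          (fun s => (w (preIdx t s)).getD (Classical.arbitrary B)))))
        (fun ω => rfl) (fun ω => hWfgen t ω) (fun v => (v.2.1, v.1, v.2.2)) (fun ω => rfl)
    have f1 : cK t ≤ condMI μ (fun ω => (σ t ω.1, sxF ((t : ℕ) + 1) ω.1)) (fun ω => ω.2 t)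
        (fun ω => (pxF (t : ℕ) ω.2, pxF ((t : ℕ) + 1) ω.1)) := by
      rw [hcKd]
      dsimp only
      calc condMI μ (fun ω => sxF ((t : ℕ) + 1) ω.1) (fun ω => ω.2 t)
            (fun ω => (pxF (t : ℕ) ω.2, pxF ((t : ℕ) + 1) ω.1))
          ≤ condMI μ (fun ω => (sxF ((t : ℕ) + 1) ω.1, σ t ω.1)) (fun ω => ω.2 t)
            (fun ω => (pxF (t : ℕ) ω.2, pxF ((t : ℕ) + 1) ω.1)) :=
            condMI_le_pair_left μ h0 _ _ _ _
        _ = _ := condMI_congr μ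
            (pair_swap_iff (fun ω : (Fin T → A) × (Fin T → B) => sxF ((t : ℕ) + 1) ω.1)
              (fun ω : (Fin T → A) × (Fin T → B) => σ t ω.1))
            (fun _ _ => Iff.rfl) (fun _ _ => Iff.rfl)
    have f2 : condMI μ (fun ω => (σ t ω.1, sxF ((t : ℕ) + 1) ω.1)) (fun ω => ω.2 t)
        (fun ω => (pxF (t : ℕ) ω.2, pxF ((t : ℕ) + 1) ω.1))
        = condMI μ (fun ω => σ t ω.1) (fun ω => ω.2 t)
            (fun ω => (pxF (t : ℕ) ω.2, pxF ((t : ℕ) + 1) ω.1))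
          + condMI μ (fun ω => sxF ((t : ℕ) + 1) ω.1) (fun ω => ω.2 t)
              (fun ω => (σ t ω.1, (pxF (t : ℕ) ω.2, pxF ((t : ℕ) + 1) ω.1))) :=
      condMI_chain μ _ _ _ _
    have f3 : condMI μ (fun ω => σ t ω.1) (fun ω => ω.2 t)
        (fun ω => (pxF (t : ℕ) ω.2, pxF ((t : ℕ) + 1) ω.1))
        = condMI μ (fun ω => σ t ω.1) (fun ω => ω.2 t)
            (fun ω => ((ω.1 t, τ t (fun s => ω.1 (preIdx t s)) (fun s => ω.2 (preIdx t s))),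
              (pxF (t : ℕ) ω.2, pxF ((t : ℕ) + 1) ω.1))) := by
      refine condMI_congr μ (fun _ _ => Iff.rfl) (fun _ _ => Iff.rfl) ?_
      intro ω' ω
      constructor
      · intro h
        rw [Prod.mk.injEq] at h
        obtain ⟨hy, hx⟩ := h
        have hx0 : ω'.1 t = ω.1 t := (pxF_eq_iff _ _ _).mp hx t (Nat.lt_succ_self _)
        have hx2 : τ t (fun s => ω'.1 (preIdx t s)) (fun s => ω'.2 (preIdx t s))
            = τ t (fun s => ω.1 (preIdx t s)) (fun s => ω.2 (preIdx t s)) :=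
          congrArg₂ (τ t)
            (funext fun s => (pxF_eq_iff _ _ _).mp hx (preIdx t s) (Nat.lt_succ_of_lt s.isLt))
            (funext fun s => (pxF_eq_iff _ _ _).mp hy (preIdx t s) s.isLt)
        rw [Prod.mk.injEq, Prod.mk.injEq, Prod.mk.injEq]
        exact ⟨⟨hx0, hx2⟩, hy, hx⟩
      · intro h
        rw [Prod.mk.injEq] at h
        exact h.2
    have f4 : condMI μ (fun ω => σ t ω.1) (fun ω => ω.2 t)
        (fun ω => ((ω.1 t, τ t (fun s => ω.1 (preIdx t s)) (fun s => ω.2 (preIdx t s))),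
          (pxF (t : ℕ) ω.2, pxF ((t : ℕ) + 1) ω.1)))
        = condMI μ (fun ω => σ t ω.1) (fun ω => ω.2 t)
            (fun ω => ((pxF (t : ℕ) ω.2, pxF ((t : ℕ) + 1) ω.1),
              (ω.1 t, τ t (fun s => ω.1 (preIdx t s)) (fun s => ω.2 (preIdx t s))))) :=
      condMI_congr μ (fun _ _ => Iff.rfl) (fun _ _ => Iff.rfl) (pair_swap_iff _ _)
    have hch := condMI_chain μ (fun ω => (pxF (t : ℕ) ω.2, pxF ((t : ℕ) + 1) ω.1))
      (fun ω => σ t ω.1) (fun ω => ω.2 t)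
      (fun ω => (ω.1 t, τ t (fun s => ω.1 (preIdx t s)) (fun s => ω.2 (preIdx t s))))
    have hn := condMI_nonneg μ h0 (fun ω => (pxF (t : ℕ) ω.2, pxF ((t : ℕ) + 1) ω.1))
      (fun ω => ω.2 t)
      (fun ω => (ω.1 t, τ t (fun s => ω.1 (preIdx t s)) (fun s => ω.2 (preIdx t s))))
    have f6 : condMI μ (fun ω => ((pxF (t : ℕ) ω.2, pxF ((t : ℕ) + 1) ω.1), σ t ω.1))
        (fun ω => ω.2 t)
        (fun ω => (ω.1 t, τ t (fun s => ω.1 (preIdx t s)) (fun s => ω.2 (preIdx t s))))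
        = condMI μ (fun ω => (σ t ω.1, (pxF (t : ℕ) ω.2, pxF ((t : ℕ) + 1) ω.1)))
            (fun ω => ω.2 t)
            (fun ω => (ω.1 t, τ t (fun s => ω.1 (preIdx t s)) (fun s => ω.2 (preIdx t s)))) :=
      condMI_congr μ (pair_swap_iff _ _) (fun _ _ => Iff.rfl) (fun _ _ => Iff.rfl)
    have f7 : condMI μ (fun ω => (σ t ω.1, (pxF (t : ℕ) ω.2, pxF ((t : ℕ) + 1) ω.1)))
        (fun ω => ω.2 t)
        (fun ω => (ω.1 t, τ t (fun s => ω.1 (preIdx t s)) (fun s => ω.2 (preIdx t s))))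
        = condMI μ (fun ω => σ t ω.1) (fun ω => ω.2 t)
            (fun ω => (ω.1 t, τ t (fun s => ω.1 (preIdx t s)) (fun s => ω.2 (preIdx t s))))
          + condMI μ (fun ω => (pxF (t : ℕ) ω.2, pxF ((t : ℕ) + 1) ω.1)) (fun ω => ω.2 t)
              (fun ω => (σ t ω.1, (ω.1 t,
                τ t (fun s => ω.1 (preIdx t s)) (fun s => ω.2 (preIdx t s))))) :=
      condMI_chain μ _ _ _ _
    rw [hdKd]
    dsimp only
    linarith
    -- Step G : tensorize back
  have stepG : condMI μ' (fun p => σ p.2 p.1.1) (fun p => p.1.2 p.2)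
      (fun p => ((p.1.1 p.2,
        τ p.2 (fun s => p.1.1 (preIdx p.2 s)) (fun s => p.1.2 (preIdx p.2 s))), p.2))
      = (∑ t : Fin T, dK t) / T := by
    rw [hdKd]
    exact condMI_tensor μ μ' hμ' h0 hT (fun t ω => σ t ω.1) (fun t ω => ω.2 t)
      (fun t ω => (ω.1 t, τ t (fun s => ω.1 (preIdx t s)) (fun s => ω.2 (preIdx t s))))
  -- Step H : remove Z from the conditioning
  have z3 : condMI μ' (fun p => p.2) (fun p => p.1.2 p.2)
      (fun p => (σ p.2 p.1.1, (p.1.1 p.2,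
        τ p.2 (fun s => p.1.1 (preIdx p.2 s)) (fun s => p.1.2 (preIdx p.2 s))))) = 0 := by
    refine condMI_zero_of_fac μ' h0' _ _ _ fun p hp => ?_
    obtain ⟨ω, t0⟩ := p
    have hchan : ∀ (t : Fin T) (c : A1 × (A × A2)) (b : B),
        jp μ (fun ω' => (σ t ω'.1, (ω'.1 t,
            τ t (fun s => ω'.1 (preIdx t s)) (fun s => ω'.2 (preIdx t s)))) = c ∧ ω'.2 t = b)
          = Γ b c.2.1 c.1 c.2.2 * jp μ (fun ω' => (σ t ω'.1, (ω'.1 t,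
              τ t (fun s => ω'.1 (preIdx t s)) (fun s => ω'.2 (preIdx t s)))) = c) :=
      fun t c b => chanFac ρ0 Γ σ τ μ hμg hΓs t _
        (fun x (w : Fin T → Option B) => (σ t x, (x t, τ t (fun s => x (preIdx t s))
          (fun s => (w (preIdx t s)).getD (Classical.arbitrary B)))))
        (fun ω' => hWfgen t ω') (fun v => (v.2.1, v.1, v.2.2)) (fun ω' => rfl) c b
    set c0 : A1 × (A × A2) := (σ t0 ω.1, (ω.1 t0,
      τ t0 (fun s => ω.1 (preIdx t0 s)) (fun s => ω.2 (preIdx t0 s)))) with hc0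
    set b0 : B := ω.2 t0 with hb0
    have e3 : jp μ' (fun q => q.2 = t0 ∧ q.1.2 q.2 = b0 ∧ (σ q.2 q.1.1, (q.1.1 q.2,
        τ q.2 (fun s => q.1.1 (preIdx q.2 s)) (fun s => q.1.2 (preIdx q.2 s)))) = c0)
        = Γ b0 c0.2.1 c0.1 c0.2.2 * jp μ (fun ω' => (σ t0 ω'.1, (ω'.1 t0,
            τ t0 (fun s => ω'.1 (preIdx t0 s)) (fun s => ω'.2 (preIdx t0 s)))) = c0) / T := by
      rw [jp_congr (show ∀ q : ((Fin T → A) × (Fin T → B)) × Fin T,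
          (q.2 = t0 ∧ q.1.2 q.2 = b0 ∧ (σ q.2 q.1.1, (q.1.1 q.2,
            τ q.2 (fun s => q.1.1 (preIdx q.2 s)) (fun s => q.1.2 (preIdx q.2 s)))) = c0)
          ↔ ((fun ω' => (σ t0 ω'.1, (ω'.1 t0, τ t0 (fun s => ω'.1 (preIdx t0 s))
              (fun s => ω'.2 (preIdx t0 s)))) = c0 ∧ ω'.2 t0 = b0) q.1 ∧ q.2 = t0) from by
        rintro ⟨ω', t'⟩
        dsimp only
        constructor
        · rintro ⟨h1x, h2x, h3x⟩
          subst h1x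
          exact ⟨⟨h3x, h2x⟩, rfl⟩
        · rintro ⟨⟨h3x, h2x⟩, h1x⟩
          subst h1x
          exact ⟨rfl, h2x, h3x⟩),
        jp_slice μ μ' hμ' (fun ω' => (σ t0 ω'.1, (ω'.1 t0,
          τ t0 (fun s => ω'.1 (preIdx t0 s)) (fun s => ω'.2 (preIdx t0 s)))) = c0
          ∧ ω'.2 t0 = b0) t0, hchan t0 c0 b0]
    have eZ : jp μ' (fun q => q.2 = t0 ∧ (σ q.2 q.1.1, (q.1.1 q.2,
        τ q.2 (fun s => q.1.1 (preIdx q.2 s)) (fun s => q.1.2 (preIdx q.2 s)))) = c0)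
        = jp μ (fun ω' => (σ t0 ω'.1, (ω'.1 t0,
            τ t0 (fun s => ω'.1 (preIdx t0 s)) (fun s => ω'.2 (preIdx t0 s)))) = c0) / T := by
      rw [jp_congr (show ∀ q : ((Fin T → A) × (Fin T → B)) × Fin T,
          (q.2 = t0 ∧ (σ q.2 q.1.1, (q.1.1 q.2,
            τ q.2 (fun s => q.1.1 (preIdx q.2 s)) (fun s => q.1.2 (preIdx q.2 s)))) = c0)
          ↔ ((fun ω' => (σ t0 ω'.1, (ω'.1 t0, τ t0 (fun s => ω'.1 (preIdx t0 s))
              (fun s => ω'.2 (preIdx t0 s)))) = c0) q.1 ∧ q.2 = t0) from by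
        rintro ⟨ω', t'⟩
        dsimp only
        constructor
        · rintro ⟨h1x, h3x⟩
          subst h1x
          exact ⟨h3x, rfl⟩
        · rintro ⟨h3x, h1x⟩
          subst h1x
          exact ⟨rfl, h3x⟩),
        jp_slice μ μ' hμ' (fun ω' => (σ t0 ω'.1, (ω'.1 t0,
          τ t0 (fun s => ω'.1 (preIdx t0 s)) (fun s => ω'.2 (preIdx t0 s)))) = c0) t0]
    have e1 : jp μ' (fun q => (σ q.2 q.1.1, (q.1.1 q.2,
        τ q.2 (fun s => q.1.1 (preIdx q.2 s)) (fun s => q.1.2 (preIdx q.2 s)))) = c0)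
        = (∑ t : Fin T, jp μ (fun ω' => (σ t ω'.1, (ω'.1 t,
            τ t (fun s => ω'.1 (preIdx t s)) (fun s => ω'.2 (preIdx t s)))) = c0)) / T := by
      rw [jp_unslice μ μ' hμ']
    have eY : jp μ' (fun q => q.1.2 q.2 = b0 ∧ (σ q.2 q.1.1, (q.1.1 q.2,
        τ q.2 (fun s => q.1.1 (preIdx q.2 s)) (fun s => q.1.2 (preIdx q.2 s)))) = c0)
        = Γ b0 c0.2.1 c0.1 c0.2.2 * (∑ t : Fin T, jp μ (fun ω' => (σ t ω'.1, (ω'.1 t,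
            τ t (fun s => ω'.1 (preIdx t s)) (fun s => ω'.2 (preIdx t s)))) = c0)) / T := by
      rw [jp_unslice μ μ' hμ']
      rw [Finset.sum_congr rfl (fun t _ => show jp μ (fun ω' => ω'.2 t = b0
          ∧ (σ t ω'.1, (ω'.1 t, τ t (fun s => ω'.1 (preIdx t s))
              (fun s => ω'.2 (preIdx t s)))) = c0)
          = Γ b0 c0.2.1 c0.1 c0.2.2 * jp μ (fun ω' => (σ t ω'.1, (ω'.1 t,
              τ t (fun s => ω'.1 (preIdx t s)) (fun s => ω'.2 (preIdx t s)))) = c0) from by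
        rw [jp_congr (show ∀ ω' : (Fin T → A) × (Fin T → B),
            (ω'.2 t = b0 ∧ (σ t ω'.1, (ω'.1 t, τ t (fun s => ω'.1 (preIdx t s))
              (fun s => ω'.2 (preIdx t s)))) = c0)
            ↔ ((σ t ω'.1, (ω'.1 t, τ t (fun s => ω'.1 (preIdx t s))
              (fun s => ω'.2 (preIdx t s)))) = c0 ∧ ω'.2 t = b0) from fun ω' => and_comm)]
        exact hchan t c0 b0)]
      rw [← Finset.mul_sum]
    show jp μ' (fun q => q.2 = t0 ∧ q.1.2 q.2 = b0 ∧ (σ q.2 q.1.1, (q.1.1 q.2,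
        τ q.2 (fun s => q.1.1 (preIdx q.2 s)) (fun s => q.1.2 (preIdx q.2 s)))) = c0)
        * jp μ' (fun q => (σ q.2 q.1.1, (q.1.1 q.2,
          τ q.2 (fun s => q.1.1 (preIdx q.2 s)) (fun s => q.1.2 (preIdx q.2 s)))) = c0)
      = jp μ' (fun q => q.2 = t0 ∧ (σ q.2 q.1.1, (q.1.1 q.2,
          τ q.2 (fun s => q.1.1 (preIdx q.2 s)) (fun s => q.1.2 (preIdx q.2 s)))) = c0)
        * jp μ' (fun q => q.1.2 q.2 = b0 ∧ (σ q.2 q.1.1, (q.1.1 q.2,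
          τ q.2 (fun s => q.1.1 (preIdx q.2 s)) (fun s => q.1.2 (preIdx q.2 s)))) = c0)
    rw [e3, e1, eZ, eY]
    ring
  have stepH : condMI μ' (fun p => σ p.2 p.1.1) (fun p => p.1.2 p.2)
      (fun p => ((p.1.1 p.2,
        τ p.2 (fun s => p.1.1 (preIdx p.2 s)) (fun s => p.1.2 (preIdx p.2 s))), p.2))
      ≤ condMI μ' (fun p => σ p.2 p.1.1) (fun p => p.1.2 p.2)
          (fun p => (p.1.1 p.2,
            τ p.2 (fun s => p.1.1 (preIdx p.2 s)) (fun s => p.1.2 (preIdx p.2 s)))) := by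
    have g1 : condMI μ' (fun p => σ p.2 p.1.1) (fun p => p.1.2 p.2)
        (fun p => ((p.1.1 p.2,
          τ p.2 (fun s => p.1.1 (preIdx p.2 s)) (fun s => p.1.2 (preIdx p.2 s))), p.2))
        = condMI μ' (fun p => σ p.2 p.1.1) (fun p => p.1.2 p.2)
          (fun p => (p.2, (p.1.1 p.2,
            τ p.2 (fun s => p.1.1 (preIdx p.2 s)) (fun s => p.1.2 (preIdx p.2 s))))) :=
      condMI_congr μ' (fun _ _ => Iff.rfl) (fun _ _ => Iff.rfl) (pair_swap_iff _ _)
    have hch1 := condMI_chain μ' (fun p : ((Fin T → A) × (Fin T → B)) × Fin T => p.2)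
      (fun p => σ p.2 p.1.1) (fun p => p.1.2 p.2)
      (fun p => (p.1.1 p.2,
        τ p.2 (fun s => p.1.1 (preIdx p.2 s)) (fun s => p.1.2 (preIdx p.2 s))))
    have hn1 := condMI_nonneg μ' h0' (fun p : ((Fin T → A) × (Fin T → B)) × Fin T => p.2)
      (fun p => p.1.2 p.2)
      (fun p => (p.1.1 p.2,
        τ p.2 (fun s => p.1.1 (preIdx p.2 s)) (fun s => p.1.2 (preIdx p.2 s))))
    have g2 : condMI μ' (fun p => ((fun p : ((Fin T → A) × (Fin T → B)) × Fin T => p.2) p,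
          σ p.2 p.1.1)) (fun p => p.1.2 p.2)
        (fun p => (p.1.1 p.2,
          τ p.2 (fun s => p.1.1 (preIdx p.2 s)) (fun s => p.1.2 (preIdx p.2 s))))
        = condMI μ' (fun p => (σ p.2 p.1.1, p.2)) (fun p => p.1.2 p.2)
          (fun p => (p.1.1 p.2,
            τ p.2 (fun s => p.1.1 (preIdx p.2 s)) (fun s => p.1.2 (preIdx p.2 s)))) :=
      condMI_congr μ' (pair_swap_iff _ _) (fun _ _ => Iff.rfl) (fun _ _ => Iff.rfl)
    have hch2 := condMI_chain μ' (fun p => σ p.2 p.1.1)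
      (fun p : ((Fin T → A) × (Fin T → B)) × Fin T => p.2) (fun p => p.1.2 p.2)
      (fun p => (p.1.1 p.2,
        τ p.2 (fun s => p.1.1 (preIdx p.2 s)) (fun s => p.1.2 (preIdx p.2 s))))
    linarith
  have hTpos : (0:ℝ) < T := Nat.cast_pos.mpr hT
  have hfinal : (∑ t : Fin T, MI μ (fun ω => ω.1 t)
        (fun ω => (pxF (t : ℕ) ω.1, pxF (t : ℕ) ω.2))) / T
      ≤ (∑ t : Fin T, dK t) / T := by
    have e4 : (∑ t : Fin T, MI μ (fun ω => ω.1 t)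
        (fun ω => (pxF (t : ℕ) ω.1, pxF (t : ℕ) ω.2))) = ∑ t : Fin T, bK t := by
      refine Finset.sum_congr rfl fun t _ => ?_
      rw [stepD t, hbKd]
    rw [e4, hEsum]
    exact (div_le_div_iff_of_pos_right hTpos).mpr (Finset.sum_le_sum fun t _ => stepF t)
  exact stepA.trans (stepB.trans (stepC.le.trans (hfinal.trans (stepG.ge.trans stepH))))
end
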